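/- arXiv:1307.4999 — 4 statements merged into one kernel-verified Lean document; each statement's English description precedes it below -/
import Mathlib

section
/- Let ν ∈ ℝ^d be Diophantine of exponent τ with constant c₀, with all components nonzero. Fix k with m_k ≠ 0 for a given nonzero m ∈ ℤ^d, and let Π = {x ∈ ℝ^d : ν · x = c, x_j ∈ [a_j, b_j] for j ≠ k}. Then there is a constant C depending only on ν, d, and the lengths b_j − a_j such that for all λ > 1, |∫_Π e^{2πi λ m·y} dσ(y)| ≤ C λ^{−(d−1)} |m|^{(d−1)τ}, where dσ is the (d−1)-dimensional surface measure on Π and |m| = |m₁|+...+|m_d|. -/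
open MeasureTheory FiniteDimensional Module
open scoped ENNReal NNReal

section Aux
variable {d : ℕ} (k : Fin d) (ν : EuclideanSpace ℝ (Fin d)) (c : ℝ)

noncomputable def nuL : EuclideanSpace ℝ (Fin d) →ₗ[ℝ] ℝ :=
  ∑ i, ν i • (EuclideanSpace.projₗ i : EuclideanSpace ℝ (Fin d) →ₗ[ℝ] ℝ)

lemma nuL_apply (x : EuclideanSpace ℝ (Fin d)) : nuL ν x = ∑ i, ν i * x i := by
  simp [nuL, LinearMap.sum_apply]

lemma sum_split (f : Fin d → ℝ) :
    ∑ i, f i = f k + ∑ i : {j : Fin d // j ≠ k}, f i := by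
  classical
  rw [← Finset.sum_compl_add_sum {k} f, Finset.sum_singleton, add_comm]
  congr 1
  exact (Finset.sum_subtype _ (by simp) f)

noncomputable def graphG (y : {j : Fin d // j ≠ k} → ℝ) : EuclideanSpace ℝ (Fin d) :=
  WithLp.toLp 2 (fun j => if h : j = k then (c - ∑ i : {j : Fin d // j ≠ k}, ν i * y i) / ν k else y ⟨j, h⟩)

lemma graphG_apply_ne (y : {j : Fin d // j ≠ k} → ℝ) (j : Fin d) (h : j ≠ k) :
    graphG k ν c y j = y ⟨j, h⟩ := dif_neg h

lemma graphG_apply_k (y : {j : Fin d // j ≠ k} → ℝ) :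
    graphG k ν c y k = (c - ∑ i : {j : Fin d // j ≠ k}, ν i * y i) / ν k := dif_pos rfl

lemma graphG_sum (hνk : ν k ≠ 0) (y : {j : Fin d // j ≠ k} → ℝ) :
    nuL ν (graphG k ν c y) = c := by
  classical
  rw [nuL_apply, sum_split k (fun i => ν i * graphG k ν c y i), graphG_apply_k]
  have h2 : ∀ i : {j : Fin d // j ≠ k}, ν i * graphG k ν c y i = ν i * y i := fun i => by
    rw [graphG_apply_ne k ν c y i.1 i.2]
  rw [Finset.sum_congr rfl (fun i _ => h2 i)]
  field_simp
  ring

lemma graphG_inj (hνk : ν k ≠ 0) : Function.Injective (graphG k ν c) := by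
  intro y z h
  funext i
  have := congrFun (congrArg WithLp.ofLp h) i.1
  rwa [graphG_apply_ne k ν c y i.1 i.2, graphG_apply_ne k ν c z i.1 i.2] at this

lemma graphG_linear (y z : {j : Fin d // j ≠ k} → ℝ) :
    graphG k ν 0 (y + z) = graphG k ν 0 y + graphG k ν 0 z := by
  ext j
  show _ = graphG k ν 0 y j + graphG k ν 0 z j
  by_cases h : j = k
  · subst h
    rw [graphG_apply_k, graphG_apply_k, graphG_apply_k]
    have h2 : ∑ i : {i' : Fin d // i' ≠ j}, ν i * (y + z) i
        = (∑ i : {i' : Fin d // i' ≠ j}, ν i * y i) + ∑ i : {i' : Fin d // i' ≠ j}, ν i * z i := by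
      rw [← Finset.sum_add_distrib]
      exact Finset.sum_congr rfl fun i _ => by show ν i * (y i + z i) = _; ring
    rw [h2]; ring
  · rw [graphG_apply_ne k ν 0 _ j h, graphG_apply_ne k ν 0 _ j h, graphG_apply_ne k ν 0 _ j h]
    rfl

lemma graphG_smul (r : ℝ) (y : {j : Fin d // j ≠ k} → ℝ) :
    graphG k ν 0 (r • y) = r • graphG k ν 0 y := by
  ext j
  show _ = r * graphG k ν 0 y j
  by_cases h : j = k
  · subst h
    rw [graphG_apply_k, graphG_apply_k]
    have h2 : ∑ i : {i' : Fin d // i' ≠ j}, ν i * (r • y) i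
        = r * ∑ i : {i' : Fin d // i' ≠ j}, ν i * y i := by
      rw [Finset.mul_sum]
      exact Finset.sum_congr rfl fun i _ => by show ν i * (r * y i) = _; ring
    rw [h2]; ring
  · rw [graphG_apply_ne k ν 0 _ j h, graphG_apply_ne k ν 0 _ j h]
    rfl

lemma graphG_decomp (hνk : ν k ≠ 0) (y : {j : Fin d // j ≠ k} → ℝ) :
    graphG k ν c y = graphG k ν c 0 + graphG k ν 0 y := by
  ext j
  show _ = graphG k ν c 0 j + graphG k ν 0 y j
  by_cases h : j = k
  · subst h
    rw [graphG_apply_k, graphG_apply_k, graphG_apply_k, ← add_div]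
    simp
    ring
  · rw [graphG_apply_ne k ν c _ j h, graphG_apply_ne k ν c _ j h, graphG_apply_ne k ν 0 _ j h]
    simp

end Aux

section Aux2
variable {d : ℕ} (k : Fin d) (ν : EuclideanSpace ℝ (Fin d)) (c : ℝ)

open Module

lemma param_measure (hd : 2 ≤ d) (hνk : ν k ≠ 0) :
    ∃ κ : ℝ≥0∞,
      (μH[(d:ℝ)-1] : Measure (EuclideanSpace ℝ (Fin d))).restrict {x | nuL ν x = c}
        = κ • Measure.map (graphG k ν c) (volume : Measure ({j : Fin d // j ≠ k} → ℝ)) := by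
  classical
  set V := LinearMap.ker (nuL ν) with hV
  have hsurj : Function.Surjective (nuL ν) := by
    intro r
    refine ⟨EuclideanSpace.single k (r / ν k), ?_⟩
    rw [nuL_apply]
    have : ∀ i, ν i * EuclideanSpace.single k (r / ν k) i
        = if i = k then r else 0 := by
      intro i
      rw [EuclideanSpace.single_apply]
      by_cases h : i = k
      · subst h; rw [if_pos rfl, if_pos rfl]; field_simp
      · rw [if_neg h, if_neg h, mul_zero]
    rw [Finset.sum_congr rfl fun i _ => this i]
    simp
  have hrank : finrank ℝ V = d - 1 := by
    have h1 := (nuL ν).finrank_range_add_finrank_ker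
    rw [LinearMap.range_eq_top.mpr hsurj, finrank_top, Module.finrank_self,
      finrank_euclideanSpace_fin] at h1
    rw [← hV] at h1
    omega
  set o := stdOrthonormalBasis ℝ V with ho
  set ψ : EuclideanSpace ℝ (Fin (finrank ℝ ↥V)) → EuclideanSpace ℝ (Fin d) :=
    fun u => graphG k ν c 0 + ((o.repr.symm u : V) : EuclideanSpace ℝ (Fin d)) with hψdef
  have hψ : Isometry ψ := by
    apply Isometry.of_dist_eq
    intro u v
    calc dist (ψ u) (ψ v)
        = dist ((o.repr.symm u : V) : EuclideanSpace ℝ (Fin d))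
            ((o.repr.symm v : V) : EuclideanSpace ℝ (Fin d)) := dist_add_left _ _ _
      _ = dist (o.repr.symm u) (o.repr.symm v) := rfl
      _ = dist u v := o.repr.symm.dist_map u v
  have hrangeψ : Set.range ψ = {x | nuL ν x = c} := by
    ext x
    constructor
    · rintro ⟨u, rfl⟩
      show nuL ν _ = c
      rw [map_add, graphG_sum k ν c hνk 0]
      have : nuL ν ((o.repr.symm u : V) : EuclideanSpace ℝ (Fin d)) = 0 :=
        (o.repr.symm u).2
      rw [this, add_zero]
    · intro hx
      have hmem : x - graphG k ν c 0 ∈ V := by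
        rw [LinearMap.mem_ker, map_sub, hx, graphG_sum k ν c hνk 0, sub_self]
      refine ⟨o.repr ⟨x - graphG k ν c 0, hmem⟩, ?_⟩
      rw [hψdef]
      simp only [LinearIsometryEquiv.symm_apply_apply]
      show graphG k ν c 0 + (x - graphG k ν c 0) = x
      abel
  set T : ({j : Fin d // j ≠ k} → ℝ) →ₗ[ℝ] V :=
    { toFun := fun y => ⟨graphG k ν 0 y, by
        rw [LinearMap.mem_ker, graphG_sum k ν 0 hνk y]⟩
      map_add' := fun y z => Subtype.ext (graphG_linear k ν y z)
      map_smul' := fun r y => Subtype.ext (graphG_smul k ν r y) } with hT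
  set S : ({j : Fin d // j ≠ k} → ℝ) →ₗ[ℝ] EuclideanSpace ℝ (Fin (finrank ℝ ↥V)) :=
    (o.repr.toLinearEquiv : V ≃ₗ[ℝ] EuclideanSpace ℝ (Fin (finrank ℝ ↥V))).toLinearMap.comp T with hS
  have hψS : ∀ y, ψ (S y) = graphG k ν c y := by
    intro y
    show graphG k ν c 0 + ((o.repr.symm (o.repr (T y)) : V) : EuclideanSpace ℝ (Fin d)) = _
    rw [LinearIsometryEquiv.symm_apply_apply]
    exact (graphG_decomp k ν c hνk y).symm
  have hSinj : Function.Injective S := by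
    intro y z h
    have : graphG k ν c y = graphG k ν c z := by rw [← hψS, ← hψS, h]
    exact graphG_inj k ν c hνk this
  have hcard : Fintype.card {j : Fin d // j ≠ k} = d - 1 := by
    have := Fintype.card_subtype_compl (fun j : Fin d => j = k)
    simp [Fintype.card_subtype_eq] at this
    simpa using this
  have hfr : finrank ℝ ({j : Fin d // j ≠ k} → ℝ) = finrank ℝ (EuclideanSpace ℝ (Fin (finrank ℝ ↥V))) := by
    rw [finrank_euclideanSpace_fin, Module.finrank_pi, hcard, hrank]
  set Se := S.linearEquivOfInjective hSinj hfr with hSe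
  set Sc := Se.toContinuousLinearEquiv with hSc
  have hScS : ∀ y, Sc y = S y := fun y => rfl
  haveI hH1 : (μH[(d:ℝ)-1] : Measure (EuclideanSpace ℝ (Fin (finrank ℝ ↥V)))).IsAddHaarMeasure := by
    have he : ((d:ℝ)-1) = ((finrank ℝ (EuclideanSpace ℝ (Fin (finrank ℝ ↥V))) : ℕ) : ℝ) := by
      rw [finrank_euclideanSpace_fin, hrank, Nat.cast_sub (by omega : 1 ≤ d)]
      norm_num
    rw [he]
    infer_instance
  set μm := Measure.map (⇑Sc) (volume : Measure ({j : Fin d // j ≠ k} → ℝ)) with hμm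
  haveI : μm.IsAddHaarMeasure := Sc.isAddHaarMeasure_map volume
  have heq : (μH[(d:ℝ)-1] : Measure (EuclideanSpace ℝ (Fin (finrank ℝ ↥V))))
      = Measure.addHaarScalarFactor (μH[(d:ℝ)-1] : Measure (EuclideanSpace ℝ (Fin (finrank ℝ ↥V)))) μm • μm :=
    Measure.isAddLeftInvariant_eq_smul _ _
  refine ⟨(Measure.addHaarScalarFactor (μH[(d:ℝ)-1] : Measure (EuclideanSpace ℝ (Fin (finrank ℝ ↥V)))) μm : ℝ≥0∞), ?_⟩
  have h1 : Measure.map ψ (μH[(d:ℝ)-1]) = (μH[(d:ℝ)-1]).restrict {x | nuL ν x = c} := by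
    rw [hψ.map_hausdorffMeasure (Or.inl (by
      have : (2:ℝ) ≤ (d:ℝ) := by exact_mod_cast hd
      linarith)), hrangeψ]
  rw [← h1]
  conv_lhs => rw [heq]
  rw [ENNReal.smul_def, Measure.map_smul]
  congr 1
  rw [hμm, Measure.map_map hψ.continuous.measurable Sc.continuous.measurable]
  congr 1
  funext y
  exact hψS y
end Aux2

lemma osc1d (α lam a b : ℝ) (hα : α ≠ 0) (hlam : 0 < lam) :
    ‖∫ t in Set.Icc a b, Complex.exp (2 * Real.pi * Complex.I * lam * α * t)‖
      ≤ 1 / (Real.pi * lam * |α|) := by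
  have hπ : (0:ℝ) < Real.pi := Real.pi_pos
  have hpos : 0 < Real.pi * lam * |α| := by positivity
  rcases le_or_gt a b with hab | hab
  · have hc : (2 * (Real.pi:ℂ) * Complex.I * lam * α) ≠ 0 := by
      simp [Real.pi_ne_zero, Complex.I_ne_zero, hα, hlam.ne', Complex.ext_iff]
    have h1 : ∫ t in Set.Icc a b, Complex.exp (2 * Real.pi * Complex.I * lam * α * t)
        = ∫ t in a..b, Complex.exp ((2 * (Real.pi:ℂ) * Complex.I * lam * α) * t) := by
      rw [intervalIntegral.integral_of_le hab, MeasureTheory.integral_Icc_eq_integral_Ioc]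
    rw [h1, integral_exp_mul_complex hc]
    have hre : ∀ t : ℝ, ((2 * (Real.pi:ℂ) * Complex.I * lam * α) * t).re = 0 := by
      intro t; simp
    have hnorm : ∀ t : ℝ, ‖Complex.exp ((2 * (Real.pi:ℂ) * Complex.I * lam * α) * t)‖ = 1 := by
      intro t
      rw [Complex.norm_exp, hre]
      exact Real.exp_zero
    have hcn : ‖(2 * (Real.pi:ℂ) * Complex.I * lam * α)‖ = 2 * Real.pi * lam * |α| := by
      simp [norm_mul, Complex.norm_real, Real.norm_eq_abs, abs_of_pos hπ, abs_of_pos hlam]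
    rw [norm_div, hcn]
    have : ‖Complex.exp ((2 * (Real.pi:ℂ) * Complex.I * lam * α) * b)
        - Complex.exp ((2 * (Real.pi:ℂ) * Complex.I * lam * α) * a)‖ ≤ 2 := by
      refine (norm_sub_le _ _).trans ?_
      rw [hnorm, hnorm]; norm_num
    rw [div_le_div_iff₀ (by positivity) hpos]
    nlinarith [hpos]
  · rw [Set.Icc_eq_empty (by linarith)]
    simp [le_of_lt, hpos]
    positivity

/-- Diophantine decay of oscillatory integrals over a (d−1)-dimensional rectangle Π
lying in the hyperplane {ν·x = c}: if ν is Diophantine of exponent τ and m_k ≠ 0, then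
|∫_Π e^{2πiλ m·y} dσ(y)| ≤ C λ^{−(d−1)} |m|^{(d−1)τ} for all λ > 1, where σ is the
(d−1)-dimensional Hausdorff measure. -/
theorem stmt4 (d : ℕ) (hd : 2 ≤ d) (τ c₀ : ℝ) (hτ : 0 < τ) (hc₀ : 0 < c₀)
    (ν : EuclideanSpace ℝ (Fin d))
    (hdio : ∀ m : Fin d → ℤ, m ≠ 0 →
      c₀ * (∑ i, |(m i : ℝ)|) ^ (-τ) ≤ |∑ i, (m i : ℝ) * ν i|)
    (k : Fin d) (m : Fin d → ℤ) (hm : m ≠ 0) (hmk : m k ≠ 0)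
    (c : ℝ) (a b : Fin d → ℝ) :
    ∃ C > 0, ∀ lam : ℝ, 1 < lam →
      ‖∫ y in {x : EuclideanSpace ℝ (Fin d) |
            ∑ i, ν i * x i = c ∧ ∀ j, j ≠ k → x j ∈ Set.Icc (a j) (b j)},
          Complex.exp (2 * Real.pi * Complex.I * lam * ((∑ i, (m i : ℝ) * y i : ℝ) : ℂ))
          ∂(μH[(d:ℝ) - 1])‖
        ≤ C * lam ^ (-((d:ℝ) - 1)) * (∑ i, |(m i : ℝ)|) ^ (((d:ℝ) - 1) * τ) := by
  classical
  have hπ : (0:ℝ) < Real.pi := Real.pi_pos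
  -- `|ν k| ≥ c₀`, in particular `ν k ≠ 0`.
  have hνk' : c₀ ≤ |ν k| := by
    have h := hdio (fun i => if i = k then 1 else 0) (by
      intro hcon
      have := congrFun hcon k
      simp at this)
    simp only [apply_ite, Int.cast_one, Int.cast_zero, abs_one, abs_zero, ite_mul, one_mul,
      zero_mul, Finset.sum_ite_eq', Finset.mem_univ, if_true] at h
    rwa [Real.one_rpow, mul_one] at h
  have hνk : ν k ≠ 0 := by
    intro h
    rw [h, abs_zero] at hνk'
    linarith
  -- `M := |m|₁ ≥ 1`
  set M : ℝ := ∑ i, |(m i : ℝ)| with hM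
  have hMpos : 1 ≤ M := by
    obtain ⟨i, hi⟩ := Function.ne_iff.mp hm
    calc (1:ℝ) ≤ |(m i : ℝ)| := by
          rw [← Int.cast_abs]
          exact_mod_cast Int.one_le_abs hi
      _ ≤ M := Finset.single_le_sum (f := fun i => |(m i : ℝ)|)
          (fun j _ => abs_nonneg _) (Finset.mem_univ i)
  have hM0 : (0:ℝ) < M := lt_of_lt_of_le one_pos hMpos
  -- the frequencies in the parametrized integral
  set α : {j : Fin d // j ≠ k} → ℝ :=
    fun i => (m i : ℝ) - (m k : ℝ) * ν i / ν k with hαdef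
  have hα : ∀ i, c₀ * M ^ (-τ) / |ν k| ≤ |α i| := by
    intro i
    set w : Fin d → ℤ := fun j => if j = i.1 then -(m k) else if j = k then m i.1 else 0 with hw
    have hw0 : w ≠ 0 := by
      intro hcon
      have := congrFun hcon i.1
      simp [hw] at this
      exact hmk this
    have hwsum : ∑ j, (w j : ℝ) * ν j = (m i.1 : ℝ) * ν k - (m k : ℝ) * ν i.1 := by
      have : ∀ j, (w j : ℝ) * ν j
          = (if j = i.1 then -(m k : ℝ) * ν j else 0) + (if j = k then (m i.1 : ℝ) * ν j else 0) := by
        intro j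
        by_cases h1 : j = i.1
        · subst h1
          rw [if_pos rfl, if_neg i.2, hw]
          simp
        · by_cases h2 : j = k
          · subst h2
            rw [if_neg h1, if_pos rfl, hw]
            simp [h1]
          · rw [if_neg h1, if_neg h2, hw]
            simp [h1, h2]
      rw [Finset.sum_congr rfl fun j _ => this j, Finset.sum_add_distrib]
      simp only [Finset.sum_ite_eq', Finset.mem_univ, if_true]
      ring
    have hwabs : ∑ j, |(w j : ℝ)| = |(m k : ℝ)| + |(m i.1 : ℝ)| := by
      have : ∀ j, |(w j : ℝ)|
          = (if j = i.1 then |(m k : ℝ)| else 0) + (if j = k then |(m i.1 : ℝ)| else 0) := by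
        intro j
        by_cases h1 : j = i.1
        · subst h1
          rw [if_pos rfl, if_neg i.2, hw]
          simp
        · by_cases h2 : j = k
          · subst h2
            rw [if_neg h1, if_pos rfl, hw]
            simp [h1]
          · rw [if_neg h1, if_neg h2, hw]
            simp [h1, h2]
      rw [Finset.sum_congr rfl fun j _ => this j, Finset.sum_add_distrib]
      simp only [Finset.sum_ite_eq', Finset.mem_univ, if_true]
    have hwM : ∑ j, |(w j : ℝ)| ≤ M := by
      rw [hwabs, hM]
      have : ({k, i.1} : Finset (Fin d)) ⊆ Finset.univ := Finset.subset_univ _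
      calc |(m k : ℝ)| + |(m i.1 : ℝ)| = ∑ j ∈ ({k, i.1} : Finset (Fin d)), |(m j : ℝ)| := by
            rw [Finset.sum_pair (Ne.symm i.2)]
        _ ≤ ∑ j, |(m j : ℝ)| := Finset.sum_le_sum_of_subset_of_nonneg this
            (fun j _ _ => abs_nonneg _)
    have hwpos : (0:ℝ) < ∑ j, |(w j : ℝ)| := by
      rw [hwabs]
      have : (1:ℝ) ≤ |(m k : ℝ)| := by
        rw [← Int.cast_abs]
        exact_mod_cast Int.one_le_abs hmk
      have := abs_nonneg ((m i.1 : ℝ))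
      linarith
    have hdio' := hdio w hw0
    rw [hwsum] at hdio'
    have hmono : M ^ (-τ) ≤ (∑ j, |(w j : ℝ)|) ^ (-τ) :=
      Real.rpow_le_rpow_of_nonpos hwpos hwM (by linarith)
    have halg : (m i.1 : ℝ) * ν k - (m k : ℝ) * ν i.1 = α i * ν k := by
      rw [hαdef]
      field_simp
    rw [halg, abs_mul] at hdio'
    have h1 : c₀ * M ^ (-τ) ≤ |α i| * |ν k| := by
      calc c₀ * M ^ (-τ) ≤ c₀ * (∑ j, |(w j : ℝ)|) ^ (-τ) := by
            exact mul_le_mul_of_nonneg_left hmono (le_of_lt hc₀)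
        _ ≤ |α i| * |ν k| := hdio'
    rw [div_le_iff₀ (by positivity)]
    exact h1
  have hα0 : ∀ i, α i ≠ 0 := by
    intro i
    have h1 := hα i
    have h2 : (0:ℝ) < c₀ * M ^ (-τ) / |ν k| := by positivity
    intro hcon
    rw [hcon, abs_zero] at h1
    linarith
  -- measure parametrization
  obtain ⟨κ, hκ⟩ := param_measure k ν c hd hνk
  set Pp : Set (EuclideanSpace ℝ (Fin d)) :=
    {x | ∑ i, ν i * x i = c ∧ ∀ j, j ≠ k → x j ∈ Set.Icc (a j) (b j)} with hPp
  set R : Set ({j : Fin d // j ≠ k} → ℝ) :=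
    Set.univ.pi fun i => Set.Icc (a i.1) (b i.1) with hR
  have hGcont : Continuous (graphG k ν c) := by
    show Continuous (fun y => WithLp.toLp 2 (fun j => graphG k ν c y j))
    refine (PiLp.continuous_toLp 2 _).comp (continuous_pi fun j => ?_)
    by_cases h : j = k
    · have : (fun y : {j : Fin d // j ≠ k} → ℝ => graphG k ν c y j)
          = fun y => (c - ∑ i : {j : Fin d // j ≠ k}, ν i * y i) / ν k := by
        funext y
        rw [h]
        exact graphG_apply_k k ν c y
      rw [this]
      exact (continuous_const.sub (continuous_finset_sum _ fun i _ =>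
        continuous_const.mul (continuous_apply i))).div_const _
    · have : (fun y : {j : Fin d // j ≠ k} → ℝ => graphG k ν c y j)
          = fun y => y ⟨j, h⟩ := by
        funext y
        exact graphG_apply_ne k ν c y j h
      rw [this]
      exact continuous_apply _
  have hPpmeas : MeasurableSet Pp := by
    have : Pp = {x : EuclideanSpace ℝ (Fin d) | nuL ν x = c} ∩
        ⋂ j, ⋂ (_ : j ≠ k), (fun x : EuclideanSpace ℝ (Fin d) => x j) ⁻¹'
          Set.Icc (a j) (b j) := by
      ext x
      simp only [hPp, Set.mem_setOf_eq, Set.mem_inter_iff, Set.mem_iInter, Set.mem_preimage,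
        nuL_apply]
    rw [this]
    refine ((isClosed_eq (nuL ν).continuous_of_finiteDimensional continuous_const).inter
      (isClosed_iInter fun j => isClosed_iInter fun hj =>
        IsClosed.preimage ((continuous_apply j).comp (PiLp.continuous_ofLp 2 _)) isClosed_Icc)).measurableSet
  have hRmeas : MeasurableSet R := MeasurableSet.univ_pi fun i => measurableSet_Icc
  have hpre : graphG k ν c ⁻¹' Pp = R := by
    ext y
    simp only [Set.mem_preimage, hPp, Set.mem_setOf_eq, hR, Set.mem_pi, Set.mem_univ,
      forall_true_left]
    constructor
    · rintro ⟨h1, h2⟩ i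
      have := h2 i.1 i.2
      rwa [graphG_apply_ne k ν c y i.1 i.2] at this
    · intro hy
      constructor
      · have := graphG_sum k ν c hνk y
        rwa [nuL_apply] at this
      · intro j hj
        rw [graphG_apply_ne k ν c y j hj]
        exact hy ⟨j, hj⟩
  have hrestrict : (μH[(d:ℝ)-1] :
      Measure (EuclideanSpace ℝ (Fin d))).restrict Pp
      = κ • Measure.map (graphG k ν c) ((volume : Measure ({j : Fin d // j ≠ k} → ℝ)).restrict R) := by
    have hsub : Pp ⊆ {x : EuclideanSpace ℝ (Fin d) | nuL ν x = c} := by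
      intro x hx
      rw [Set.mem_setOf_eq, nuL_apply]
      exact hx.1
    calc (μH[(d:ℝ)-1] : Measure (EuclideanSpace ℝ (Fin d))).restrict Pp
        = ((μH[(d:ℝ)-1] : Measure (EuclideanSpace ℝ (Fin d))).restrict
            {x | nuL ν x = c}).restrict Pp := by
          rw [Measure.restrict_restrict hPpmeas, Set.inter_eq_left.mpr hsub]
      _ = (κ • Measure.map (graphG k ν c) volume).restrict Pp := by rw [hκ]
      _ = κ • (Measure.map (graphG k ν c) volume).restrict Pp := by
          rw [Measure.restrict_smul]
      _ = κ • Measure.map (graphG k ν c) (volume.restrict R) := by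
          rw [Measure.restrict_map hGcont.measurable hPpmeas, hpre]
  -- constant
  have hcard : Fintype.card {j : Fin d // j ≠ k} = d - 1 := by
    have h := Fintype.card_subtype_compl (fun j : Fin d => j = k)
    simp [Fintype.card_subtype_eq] at h
    simpa using h
  have hBpos : (0:ℝ) < |ν k| / (Real.pi * c₀) := by
    have : (0:ℝ) < |ν k| := lt_of_lt_of_le hc₀ hνk'
    positivity
  refine ⟨ENNReal.toReal κ * (|ν k| / (Real.pi * c₀)) ^ (d - 1) + 1, by positivity, ?_⟩
  intro lam hlam
  have hlam0 : (0:ℝ) < lam := lt_trans one_pos hlam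
  set f : EuclideanSpace ℝ (Fin d) → ℂ :=
    fun y => Complex.exp (2 * Real.pi * Complex.I * lam * ((∑ i, (m i : ℝ) * y i : ℝ) : ℂ))
    with hf
  have hfcont : Continuous f := by
    apply Complex.continuous_exp.comp
    exact continuous_const.mul (Complex.continuous_ofReal.comp
      (continuous_finset_sum _ fun i _ => continuous_const.mul ((continuous_apply i).comp (PiLp.continuous_ofLp 2 _))))
  have hint1 : ∫ y in Pp, f y ∂(μH[(d:ℝ)-1])
      = ENNReal.toReal κ • ∫ y in R, f (graphG k ν c y) := by
    rw [hrestrict, integral_smul_measure,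
      integral_map hGcont.aemeasurable hfcont.aestronglyMeasurable]
  have hkey : ∀ y : {j : Fin d // j ≠ k} → ℝ,
      (∑ j, (m j : ℝ) * graphG k ν c y j)
        = (m k : ℝ) * c / ν k + ∑ i : {j : Fin d // j ≠ k}, α i * y i := by
    intro y
    rw [sum_split k (fun j => (m j : ℝ) * graphG k ν c y j), graphG_apply_k]
    have hcongr : ∑ i : {j : Fin d // j ≠ k}, (m i.1 : ℝ) * graphG k ν c y i.1
        = ∑ i : {j : Fin d // j ≠ k}, (m i.1 : ℝ) * y i :=
      Finset.sum_congr rfl fun i _ => by rw [graphG_apply_ne k ν c y i.1 i.2]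
    rw [hcongr]
    have hsum2 : ∑ i : {j : Fin d // j ≠ k}, α i * y i
        = (∑ i : {j : Fin d // j ≠ k}, (m i.1 : ℝ) * y i)
          - (m k : ℝ) / ν k * ∑ i : {j : Fin d // j ≠ k}, ν i.1 * y i := by
      rw [Finset.mul_sum, ← Finset.sum_sub_distrib]
      refine Finset.sum_congr rfl fun i _ => ?_
      rw [hαdef]
      field_simp
    rw [hsum2]
    field_simp
    ring
  have hfac : (fun y : {j : Fin d // j ≠ k} → ℝ => f (graphG k ν c y))
      = fun y => Complex.exp (2 * Real.pi * Complex.I * lam * (((m k : ℝ) * c / ν k : ℝ) : ℂ))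
          * ∏ i : {j : Fin d // j ≠ k},
              Complex.exp (2 * Real.pi * Complex.I * lam * (α i) * (y i)) := by
    funext y
    rw [hf]
    simp only
    rw [hkey y, ← Complex.exp_sum, ← Complex.exp_add]
    congr 1
    push_cast
    rw [mul_add, Finset.mul_sum]
    congr 1
    exact Finset.sum_congr rfl fun i _ => by ring
  have hprod : ∫ y in R, f (graphG k ν c y)
      = Complex.exp (2 * Real.pi * Complex.I * lam * (((m k : ℝ) * c / ν k : ℝ) : ℂ))
        * ∏ i : {j : Fin d // j ≠ k}, ∫ t in Set.Icc (a i.1) (b i.1),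
            Complex.exp (2 * Real.pi * Complex.I * lam * (α i) * t) := by
    rw [hfac, MeasureTheory.integral_const_mul]
    congr 1
    rw [← integral_indicator hRmeas]
    have hind : Set.indicator R
        (fun y : {j : Fin d // j ≠ k} → ℝ => ∏ i : {j : Fin d // j ≠ k},
          Complex.exp (2 * Real.pi * Complex.I * lam * (α i) * (y i)))
        = fun y => ∏ i : {j : Fin d // j ≠ k},
            Set.indicator (Set.Icc (a i.1) (b i.1))
              (fun t => Complex.exp (2 * Real.pi * Complex.I * lam * (α i) * t)) (y i) := by
      funext y
      by_cases hy : y ∈ R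
      · rw [Set.indicator_of_mem hy]
        refine Finset.prod_congr rfl fun i _ => ?_
        exact (Set.indicator_of_mem
          (show y i ∈ Set.Icc (a i.1) (b i.1) from hy i (Set.mem_univ i))
          (fun t => Complex.exp (2 * Real.pi * Complex.I * lam * (α i) * t))).symm
      · rw [Set.indicator_of_notMem hy]
        symm
        rw [hR, Set.mem_pi] at hy
        push_neg at hy
        obtain ⟨i, _, hi⟩ := hy
        exact Finset.prod_eq_zero (Finset.mem_univ i)
          (Set.indicator_of_notMem hi
            (fun t => Complex.exp (2 * Real.pi * Complex.I * lam * (α i) * t)))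
    rw [hind, integral_fintype_prod_volume_eq_prod
      (f := fun (i : {j : Fin d // j ≠ k}) (t : ℝ) =>
        Set.indicator (Set.Icc (a i.1) (b i.1))
          (fun t => Complex.exp (2 * Real.pi * Complex.I * lam * (α i) * t)) t)]
    exact Finset.prod_congr rfl fun i _ => integral_indicator measurableSet_Icc
  -- final estimate
  have hnorm1 : ‖Complex.exp (2 * Real.pi * Complex.I * lam
      * (((m k : ℝ) * c / ν k : ℝ) : ℂ))‖ = 1 := by
    rw [Complex.norm_exp]
    have : (2 * (Real.pi:ℂ) * Complex.I * lam * (((m k : ℝ) * c / ν k : ℝ) : ℂ)).re = 0 := by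
      simp
    rw [this, Real.exp_zero]
  have hbound1 : ∀ i : {j : Fin d // j ≠ k},
      ‖∫ t in Set.Icc (a i.1) (b i.1),
          Complex.exp (2 * Real.pi * Complex.I * lam * (α i) * t)‖
        ≤ |ν k| / (Real.pi * c₀) * M ^ τ / lam := by
    intro i
    refine (osc1d (α i) lam (a i.1) (b i.1) (hα0 i) hlam0).trans ?_
    have h1 : c₀ * M ^ (-τ) / |ν k| ≤ |α i| := hα i
    have hν0 : (0:ℝ) < |ν k| := lt_of_lt_of_le hc₀ hνk'
    have h2 : (0:ℝ) < c₀ * M ^ (-τ) / |ν k| := by positivity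
    have h3 : 1 / (Real.pi * lam * |α i|)
        ≤ 1 / (Real.pi * lam * (c₀ * M ^ (-τ) / |ν k|)) := by
      apply one_div_le_one_div_of_le (by positivity)
      exact mul_le_mul_of_nonneg_left h1 (by positivity)
    refine h3.trans (le_of_eq ?_)
    rw [Real.rpow_neg (le_of_lt hM0)]
    have hMτ : (0:ℝ) < M ^ τ := Real.rpow_pos_of_pos hM0 τ
    field_simp
  have hprodbound :
      ‖∏ i : {j : Fin d // j ≠ k}, ∫ t in Set.Icc (a i.1) (b i.1),
          Complex.exp (2 * Real.pi * Complex.I * lam * (α i) * t)‖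
        ≤ (|ν k| / (Real.pi * c₀) * M ^ τ / lam) ^ (d - 1) := by
    rw [norm_prod]
    calc ∏ i : {j : Fin d // j ≠ k}, ‖∫ t in Set.Icc (a i.1) (b i.1),
            Complex.exp (2 * Real.pi * Complex.I * lam * (α i) * t)‖
        ≤ ∏ _i : {j : Fin d // j ≠ k}, (|ν k| / (Real.pi * c₀) * M ^ τ / lam) :=
          Finset.prod_le_prod (fun i _ => norm_nonneg _) (fun i _ => hbound1 i)
      _ = (|ν k| / (Real.pi * c₀) * M ^ τ / lam) ^ (d - 1) := by
          rw [Finset.prod_const, Finset.card_univ, hcard]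
  have hpow : (|ν k| / (Real.pi * c₀) * M ^ τ / lam) ^ (d - 1)
      = (|ν k| / (Real.pi * c₀)) ^ (d - 1) * lam ^ (-((d:ℝ)-1))
        * M ^ (((d:ℝ)-1) * τ) := by
    have hn : ((d - 1 : ℕ) : ℝ) = (d:ℝ) - 1 := by
      rw [Nat.cast_sub (by omega)]
      norm_num
    rw [div_pow, mul_pow]
    rw [← Real.rpow_natCast (M ^ τ) (d - 1), ← Real.rpow_natCast lam (d - 1), hn]
    rw [← Real.rpow_mul (le_of_lt hM0), div_eq_mul_inv, ← Real.rpow_neg (le_of_lt hlam0)]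
    rw [mul_comm τ ((d:ℝ) - 1)]
    ring
  rw [hint1, hprod, norm_smul, norm_mul, hnorm1, one_mul, Real.norm_eq_abs,
    abs_of_nonneg ENNReal.toReal_nonneg]
  have hstep1 : ENNReal.toReal κ * ‖∏ i : {j : Fin d // j ≠ k},
      ∫ t in Set.Icc (a i.1) (b i.1),
        Complex.exp (2 * Real.pi * Complex.I * lam * (α i) * t)‖
      ≤ ENNReal.toReal κ * ((|ν k| / (Real.pi * c₀)) ^ (d - 1) * lam ^ (-((d:ℝ)-1))
        * M ^ (((d:ℝ)-1) * τ)) := by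
    rw [← hpow]
    exact mul_le_mul_of_nonneg_left hprodbound ENNReal.toReal_nonneg
  refine hstep1.trans ?_
  have hfactpos : (0:ℝ) < lam ^ (-((d:ℝ)-1)) * M ^ (((d:ℝ)-1) * τ) := by
    have := Real.rpow_pos_of_pos hlam0 (-((d:ℝ)-1))
    have := Real.rpow_pos_of_pos hM0 (((d:ℝ)-1) * τ)
    positivity
  calc ENNReal.toReal κ * ((|ν k| / (Real.pi * c₀)) ^ (d - 1) * lam ^ (-((d:ℝ)-1))
        * M ^ (((d:ℝ)-1) * τ))
      = (ENNReal.toReal κ * (|ν k| / (Real.pi * c₀)) ^ (d - 1))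
        * (lam ^ (-((d:ℝ)-1)) * M ^ (((d:ℝ)-1) * τ)) := by ring
    _ ≤ (ENNReal.toReal κ * (|ν k| / (Real.pi * c₀)) ^ (d - 1) + 1)
        * (lam ^ (-((d:ℝ)-1)) * M ^ (((d:ℝ)-1) * τ)) := by
        apply mul_le_mul_of_nonneg_right _ (le_of_lt hfactpos)
        linarith
    _ = (ENNReal.toReal κ * (|ν k| / (Real.pi * c₀)) ^ (d - 1) + 1)
        * lam ^ (-((d:ℝ)-1)) * M ^ (((d:ℝ)-1) * τ) := by ring
end

section
/- Let D ⊂ ℝ^d be a bounded domain with diam(D) ≤ 1, and suppose the Poisson kernel P(x,·) on a boundary face Π ⊂ ∂D satisfies |P(x,y)| ≤ C₀ d(x)/|x−y|^d for σ-a.e. y ∈ Π, where d(x) = dist(x, ∂D). Let Π lie in a hyperplane and let Π_ρ = {y ∈ Π : dist(y, ∂Π) ≤ ρ}. Then for every x ∈ D with d(x) ≥ 2ρ, ∫_{Π_ρ} |P(x,y)| dσ(y) ≤ C ρ / d(x), with C independent of x and ρ. -/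
open MeasureTheory Metric
open scoped RealInnerProductSpace ENNReal

local notation "E" d => EuclideanSpace ℝ (Fin d)

lemma boxBound (d : ℕ) (hd : 2 ≤ d) (nv u x : E d) (hn : ‖nv‖ = 1) (hu : ‖u‖ = 1)
    (hnu : ⟪nv, u⟫ = 0) (c b ρ R : ℝ) (hρ : 0 ≤ ρ) (hR : 0 ≤ R) :
    μH[(d:ℝ)-1] {y : E d | ⟪nv, y⟫ = c ∧ |⟪u, y⟫ - b| ≤ ρ ∧ dist x y ≤ R}
      ≤ ENNReal.ofReal (Real.sqrt (d-1 : ℕ) ^ (d-1) * ((2*ρ) * (2*R)^(d-2))) := by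
  obtain ⟨e, rfl⟩ : ∃ e, d = e + 2 := ⟨d - 2, by omega⟩
  have hsub1 : (e + 2) - 1 = e + 1 := rfl
  have hsub2 : (e + 2) - 2 = e := rfl
  rw [hsub1, hsub2]
  have hexp : ((e+2:ℕ):ℝ) - 1 = ((e+1:ℕ):ℝ) := by push_cast; ring
  rw [hexp]
  -- orthonormal basis with B 0 = nv, B 1 = u
  have hcard : Module.finrank ℝ (E (e+2)) = Fintype.card (Fin (e+2)) := by
    simp [finrank_euclideanSpace]
  set v : Fin (e+2) → E (e+2) := fun i => if i = 0 then nv else u with hv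
  have h01 : (1 : Fin (e+2)) ≠ 0 := by simp [Fin.ext_iff]
  have hv0 : v 0 = nv := if_pos rfl
  have hv1 : v 1 = u := if_neg h01
  have hon : Orthonormal ℝ (({0, 1} : Set (Fin (e+2))).restrict v) := by
    constructor
    · rintro ⟨i, hi⟩
      rcases hi with rfl | hi
      · show ‖v 0‖ = 1; rw [hv0]; exact hn
      · simp only [Set.mem_singleton_iff] at hi; subst hi
        show ‖v 1‖ = 1; rw [hv1]; exact hu
    · rintro ⟨i, hi⟩ ⟨j, hj⟩ hij
      have hij' : i ≠ j := by simpa [Subtype.ext_iff] using hij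
      rcases hi with rfl | hi <;> rcases hj with rfl | hj
      · exact absurd rfl hij'
      · simp only [Set.mem_singleton_iff] at hj; subst hj
        show ⟪v 0, v 1⟫ = 0; rw [hv0, hv1]; exact hnu
      · simp only [Set.mem_singleton_iff] at hi; subst hi
        show ⟪v 1, v 0⟫ = 0; rw [hv0, hv1]
        rw [real_inner_comm]; exact hnu
      · simp only [Set.mem_singleton_iff] at hi hj; subst hi; subst hj
        exact absurd rfl hij'
  obtain ⟨B, hB⟩ := hon.exists_orthonormalBasis_extension_of_card_eq hcard
  have hB0 : B 0 = nv := by rw [hB 0 (by simp), hv0]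
  have hB1 : B 1 = u := by rw [hB 1 (by simp), hv1]
  set Φ : (E (e+2)) → (Fin (e+1) → ℝ) := fun y i => B.repr y i.succ with hΦ
  set g : (Fin (e+1) → ℝ) → E (e+2) :=
    fun w => B.repr.symm ((WithLp.equiv 2 (Fin (e+2) → ℝ)).symm
      (fun idx => Fin.cases c (fun i => w i) idx)) with hg
  have hgLip : LipschitzWith (Real.sqrt ((e+1:ℕ):ℝ)).toNNReal g := by
    apply LipschitzWith.of_dist_le_mul
    intro w w'
    rw [dist_eq_norm, dist_eq_norm]
    have hsub : g w - g w' = B.repr.symm ((WithLp.equiv 2 (Fin (e+2) → ℝ)).symm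
        (fun idx => Fin.cases c (fun i => w i) idx)
        - (WithLp.equiv 2 (Fin (e+2) → ℝ)).symm (fun idx => Fin.cases c (fun i => w' i) idx)) := by
      rw [hg]; simp [map_sub]
    rw [hsub, LinearIsometryEquiv.norm_map]
    rw [EuclideanSpace.norm_eq]
    have hcoord : ∀ idx : Fin (e+2),
        ((WithLp.equiv 2 (Fin (e+2) → ℝ)).symm (fun idx => Fin.cases c (fun i => w i) idx)
        - (WithLp.equiv 2 (Fin (e+2) → ℝ)).symm (fun idx => Fin.cases c (fun i => w' i) idx)) idx
        = Fin.cases c (fun i => w i) idx - Fin.cases c (fun i => w' i) idx := by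
      intro idx; rfl
    have hsum : ∑ idx : Fin (e+2), ‖((WithLp.equiv 2 (Fin (e+2) → ℝ)).symm (fun idx => Fin.cases c (fun i => w i) idx)
        - (WithLp.equiv 2 (Fin (e+2) → ℝ)).symm (fun idx => Fin.cases c (fun i => w' i) idx)) idx‖^2
        ≤ ((e+1:ℕ):ℝ) * ‖w - w'‖^2 := by
      simp only [hcoord]
      rw [Fin.sum_univ_succ]
      simp only [Fin.cases_zero, Fin.cases_succ, sub_self, norm_zero, ne_eq]
      have hb : ∀ i : Fin (e+1), ‖w i - w' i‖^2 ≤ ‖w - w'‖^2 := by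
        intro i
        have := norm_le_pi_norm (w - w') i
        simp only [Pi.sub_apply] at this
        exact pow_le_pow_left₀ (norm_nonneg _) this 2
      have hss : ∑ i : Fin (e+1), ‖w i - w' i‖^2 ≤ ∑ _i : Fin (e+1), ‖w - w'‖^2 :=
        Finset.sum_le_sum (fun i _ => hb i)
      rw [Finset.sum_const, Finset.card_univ, Fintype.card_fin, nsmul_eq_mul] at hss
      nlinarith [hss]
    calc Real.sqrt (∑ idx : Fin (e+2), ‖_‖^2) ≤ Real.sqrt (((e+1:ℕ):ℝ) * ‖w - w'‖^2) :=
          Real.sqrt_le_sqrt hsum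
      _ = Real.sqrt ((e+1:ℕ):ℝ) * ‖w - w'‖ := by
          rw [Real.sqrt_mul (by positivity), Real.sqrt_sq (norm_nonneg _)]
      _ = ↑(Real.sqrt ((e+1:ℕ):ℝ)).toNNReal * ‖w - w'‖ := by
          rw [Real.coe_toNNReal _ (Real.sqrt_nonneg _)]
  have hginv : ∀ y : E (e+2), ⟪nv, y⟫ = c → g (Φ y) = y := by
    intro y hy
    have hfun : (fun idx : Fin (e+2) => Fin.cases c (fun i => Φ y i) idx)
        = fun idx => B.repr y idx := by
      funext idx
      induction idx using Fin.cases with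
      | zero =>
        simp only [Fin.cases_zero]
        rw [B.repr_apply_apply, hB0, hy]
      | succ i => simp [hΦ]
    rw [hg]
    simp only [hfun]
    have : (WithLp.equiv 2 (Fin (e+2) → ℝ)).symm (fun idx => B.repr y idx) = B.repr y := rfl
    rw [this, LinearIsometryEquiv.symm_apply_apply]
  set A := {y : E (e+2) | ⟪nv, y⟫ = c ∧ |⟪u, y⟫ - b| ≤ ρ ∧ dist x y ≤ R} with hA
  have hA1 : A ⊆ g '' (Φ '' A) := fun y hy =>
    ⟨Φ y, Set.mem_image_of_mem _ hy, hginv y hy.1⟩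
  set I : Fin (e+1) → Set ℝ := fun i => if i = 0 then Set.Icc (b - ρ) (b + ρ)
      else Set.Icc (⟪B i.succ, x⟫ - R) (⟪B i.succ, x⟫ + R) with hI
  have hbox : Φ '' A ⊆ Set.univ.pi I := by
    rintro _ ⟨y, hy, rfl⟩ i _
    obtain ⟨hyc, hyb, hyR⟩ := hy
    have hrepr : Φ y i = ⟪B i.succ, y⟫ := B.repr_apply_apply y i.succ
    by_cases hi : i = 0
    · subst hi
      simp only [hI, if_pos rfl]
      have h10 : Φ y 0 = ⟪u, y⟫ := by
        rw [hrepr, Fin.succ_zero_eq_one, hB1]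
      rw [h10]
      obtain ⟨h1, h2⟩ := abs_le.mp hyb
      exact ⟨by linarith, by linarith⟩
    · simp only [hI, if_neg hi]
      rw [hrepr]
      have hB1' : ‖B i.succ‖ = 1 := B.orthonormal.1 i.succ
      have hdiff : |⟪B i.succ, y⟫ - ⟪B i.succ, x⟫| ≤ R := by
        rw [← inner_sub_right]
        calc |⟪B i.succ, y - x⟫| ≤ ‖B i.succ‖ * ‖y - x‖ := abs_real_inner_le_norm _ _
          _ = dist x y := by rw [hB1', one_mul, ← dist_eq_norm, dist_comm]
          _ ≤ R := hyR
      obtain ⟨h1, h2⟩ := abs_le.mp hdiff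
      exact ⟨by linarith, by linarith⟩
  have hpi : (μH[((e+1:ℕ):ℝ)] : Measure ((Fin (e+1)) → ℝ)) = volume := by
    simpa using (hausdorffMeasure_pi_real (ι := Fin (e+1)))
  have hKpow : ((Real.sqrt ((e+1:ℕ):ℝ)).toNNReal : ℝ≥0∞) ^ ((e+1:ℕ):ℝ)
      = ENNReal.ofReal (Real.sqrt ((e+1:ℕ):ℝ) ^ (e+1)) := by
    rw [ENNReal.rpow_natCast, ENNReal.ofReal_pow (Real.sqrt_nonneg _)]
    rfl
  have hIvol : volume (Set.univ.pi I) ≤ ENNReal.ofReal (2*ρ) * ENNReal.ofReal (2*R) ^ e := by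
    rw [volume_pi_pi]
    have h0 : volume (I 0) = ENNReal.ofReal (2*ρ) := by
      simp only [hI, if_pos rfl, Real.volume_Icc]
      congr 1; ring
    have hrest : ∀ i : Fin (e+1), i ≠ 0 → volume (I i) = ENNReal.ofReal (2*R) := by
      intro i hi
      simp only [hI, if_neg hi, Real.volume_Icc]
      congr 1; ring
    calc ∏ i, volume (I i) = volume (I 0) * ∏ i ∈ Finset.univ.erase 0, volume (I i) :=
          (Finset.mul_prod_erase Finset.univ _ (Finset.mem_univ 0)).symm
      _ = ENNReal.ofReal (2*ρ) * ENNReal.ofReal (2*R) ^ e := by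
          rw [h0, Finset.prod_congr rfl (fun i hi => hrest i (Finset.mem_erase.mp hi).1),
            Finset.prod_const]
          congr 1
          rw [Finset.card_erase_of_mem (Finset.mem_univ _), Finset.card_univ, Fintype.card_fin,
            Nat.add_sub_cancel]
      _ ≤ ENNReal.ofReal (2*ρ) * ENNReal.ofReal (2*R) ^ e := le_rfl
  calc μH[((e+1:ℕ):ℝ)] A ≤ μH[((e+1:ℕ):ℝ)] (g '' (Φ '' A)) := measure_mono hA1
    _ ≤ ((Real.sqrt ((e+1:ℕ):ℝ)).toNNReal : ℝ≥0∞) ^ ((e+1:ℕ):ℝ) * μH[((e+1:ℕ):ℝ)] (Φ '' A) :=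
        hgLip.hausdorffMeasure_image_le (by positivity) _
    _ ≤ ((Real.sqrt ((e+1:ℕ):ℝ)).toNNReal : ℝ≥0∞) ^ ((e+1:ℕ):ℝ) * μH[((e+1:ℕ):ℝ)] (Set.univ.pi I) :=
        mul_le_mul_right (measure_mono hbox) _
    _ = ENNReal.ofReal (Real.sqrt ((e+1:ℕ):ℝ) ^ (e+1)) * volume (Set.univ.pi I) := by
        rw [hKpow, hpi]
    _ ≤ ENNReal.ofReal (Real.sqrt ((e+1:ℕ):ℝ) ^ (e+1)) * (ENNReal.ofReal (2*ρ) * ENNReal.ofReal (2*R) ^ e) :=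
        mul_le_mul_right hIvol _
    _ = ENNReal.ofReal (Real.sqrt ((e+1:ℕ):ℝ) ^ (e+1) * ((2*ρ) * (2*R)^e)) := by
        rw [← ENNReal.ofReal_pow (show (0:ℝ) ≤ 2*R by positivity),
          ← ENNReal.ofReal_mul (show (0:ℝ) ≤ 2*ρ by positivity),
          ← ENNReal.ofReal_mul (by positivity)]

lemma shellBound (d : ℕ) (hd : 2 ≤ d) (nv u x : E d) (hn : ‖nv‖ = 1) (hu : ‖u‖ = 1)
    (hnu : ⟪nv, u⟫ = 0) (c b ρ δ : ℝ) (hρ : 0 ≤ ρ) (hδ : 0 < δ) :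
    ∫⁻ y in {y : E d | ⟪nv, y⟫ = c ∧ |⟪u, y⟫ - b| ≤ ρ ∧ δ ≤ dist x y},
        ENNReal.ofReal ((dist x y ^ d)⁻¹) ∂μH[(d:ℝ)-1]
      ≤ ENNReal.ofReal (Real.sqrt (d-1:ℕ) ^ (d-1) * 2^(2*d) * ρ / δ^2) := by
  have hbb := fun (R : ℝ) (hR : 0 ≤ R) => boxBound d hd nv u x hn hu hnu c b ρ R hρ hR
  obtain ⟨e, rfl⟩ : ∃ e, d = e + 2 := ⟨d - 2, by omega⟩
  have hsub1 : (e + 2) - 1 = e + 1 := rfl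
  have hsub2 : (e + 2) - 2 = e := rfl
  rw [hsub1]
  simp only [hsub1, hsub2] at hbb
  set K0 : ℝ := Real.sqrt ((e+1:ℕ):ℝ) ^ (e+1) with hK0
  have hK0nn : 0 ≤ K0 := by positivity
  set A : ℕ → Set (E (e+2)) := fun n =>
    {y | ⟪nv, y⟫ = c ∧ |⟪u, y⟫ - b| ≤ ρ ∧ dist x y ≤ 2^(n+1)*δ ∧ 2^n*δ ≤ dist x y} with hAdef
  -- covering
  have key : ∀ t : ℝ, δ ≤ t → ∃ n : ℕ, 2^n*δ ≤ t ∧ t ≤ 2^(n+1)*δ := by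
    intro t ht
    have hex : ∃ n : ℕ, t < 2^(n+1)*δ := by
      obtain ⟨n, hn2⟩ := pow_unbounded_of_one_lt (t/δ) (one_lt_two (α := ℝ))
      refine ⟨n, ?_⟩
      have : t < 2^n * δ := by
        rw [div_lt_iff₀ hδ] at hn2; linarith
      have h2 : (2:ℝ)^n * δ ≤ 2^(n+1)*δ := by
        have : (2:ℝ)^n ≤ 2^(n+1) := pow_le_pow_right₀ one_le_two (Nat.le_succ n)
        nlinarith
      linarith
    classical
    by_cases h0 : Nat.find hex = 0
    · refine ⟨0, by simpa using ht, ?_⟩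
      have := Nat.find_spec hex
      rw [h0] at this
      exact this.le
    · obtain ⟨m', hm'⟩ : ∃ m', Nat.find hex = m' + 1 :=
        ⟨Nat.find hex - 1, by omega⟩
      refine ⟨m'+1, ?_, ?_⟩
      · have hnm := Nat.find_min hex (m := m') (by omega)
        push_neg at hnm
        exact hnm
      · have := Nat.find_spec hex
        rw [hm'] at this
        exact this.le
  have hcov : {y : E (e+2) | ⟪nv, y⟫ = c ∧ |⟪u, y⟫ - b| ≤ ρ ∧ δ ≤ dist x y} ⊆ ⋃ n, A n := by
    rintro y ⟨h1, h2, h3⟩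
    obtain ⟨n, hn1, hn2⟩ := key (dist x y) h3
    exact Set.mem_iUnion.mpr ⟨n, h1, h2, hn2, hn1⟩
  -- per-shell bound
  have hshell : ∀ n : ℕ, ∫⁻ y in A n, ENNReal.ofReal ((dist x y ^ (e+2))⁻¹) ∂μH[((e+2:ℕ):ℝ)-1]
      ≤ ENNReal.ofReal (K0 * 2^(2*e+3) * ρ/δ^2 * ((4:ℝ)⁻¹)^n) := by
    intro n
    have hApos : (0:ℝ) < 2^n*δ := by positivity
    have hmono : ∫⁻ y in A n, ENNReal.ofReal ((dist x y ^ (e+2))⁻¹) ∂μH[((e+2:ℕ):ℝ)-1]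
        ≤ ∫⁻ _y in A n, ENNReal.ofReal (((2^n*δ)^(e+2))⁻¹) ∂μH[((e+2:ℕ):ℝ)-1] := by
      apply setLIntegral_mono measurable_const
      intro y hy
      apply ENNReal.ofReal_le_ofReal
      apply inv_anti₀ (by positivity)
      exact pow_le_pow_left₀ hApos.le hy.2.2.2 _
    have hμ : μH[((e+2:ℕ):ℝ)-1] (A n) ≤ ENNReal.ofReal (K0 * ((2*ρ) * (2*(2^(n+1)*δ))^e)) := by
      refine le_trans (measure_mono ?_) (hbb (2^(n+1)*δ) (by positivity))
      exact fun y hy => ⟨hy.1, hy.2.1, hy.2.2.1⟩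
    calc ∫⁻ y in A n, ENNReal.ofReal ((dist x y ^ (e+2))⁻¹) ∂μH[((e+2:ℕ):ℝ)-1]
        ≤ ∫⁻ _y in A n, ENNReal.ofReal (((2^n*δ)^(e+2))⁻¹) ∂μH[((e+2:ℕ):ℝ)-1] := hmono
      _ = ENNReal.ofReal (((2^n*δ)^(e+2))⁻¹) * μH[((e+2:ℕ):ℝ)-1] (A n) := setLIntegral_const _ _
      _ ≤ ENNReal.ofReal (((2^n*δ)^(e+2))⁻¹) * ENNReal.ofReal (K0 * ((2*ρ) * (2*(2^(n+1)*δ))^e)) :=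
          mul_le_mul_right hμ _
      _ = ENNReal.ofReal (((2^n*δ)^(e+2))⁻¹ * (K0 * ((2*ρ) * (2*(2^(n+1)*δ))^e))) := by
          rw [← ENNReal.ofReal_mul (by positivity)]
      _ ≤ ENNReal.ofReal (K0 * 2^(2*e+3) * ρ/δ^2 * ((4:ℝ)⁻¹)^n) := by
          apply ENNReal.ofReal_le_ofReal
          have ha : (0:ℝ) < (2:ℝ)^n := by positivity
          have hEq : (((2^n*δ):ℝ)^(e+2))⁻¹ * (K0 * ((2*ρ) * (2*(2^(n+1)*δ))^e))
              = K0 * (2*4^e) * ρ/δ^2 * ((4:ℝ)⁻¹)^n := by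
            have h4n : ((4:ℝ)⁻¹)^n = (((2:ℝ)^n)^2)⁻¹ := by
              rw [inv_pow, ← pow_mul, mul_comm n 2, pow_mul]
              norm_num
            have h2n2 : (2:ℝ)*(2^(n+1)*δ) = 4*((2:ℝ)^n*δ) := by ring
            rw [h2n2, h4n]
            field_simp
            ring
          rw [hEq]
          have h4e : (2:ℝ)*4^e ≤ 2^(2*e+3) := by
            have h1 : (4:ℝ)^e = 2^(2*e) := by
              rw [pow_mul]; norm_num
            rw [h1, pow_add]
            have : (0:ℝ) < 2^(2*e) := by positivity
            nlinarith
          gcongr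
  -- summation
  calc ∫⁻ y in {y : E (e+2) | ⟪nv, y⟫ = c ∧ |⟪u, y⟫ - b| ≤ ρ ∧ δ ≤ dist x y},
        ENNReal.ofReal ((dist x y ^ (e+2))⁻¹) ∂μH[((e+2:ℕ):ℝ)-1]
      ≤ ∫⁻ y in ⋃ n, A n, ENNReal.ofReal ((dist x y ^ (e+2))⁻¹) ∂μH[((e+2:ℕ):ℝ)-1] :=
        lintegral_mono' (Measure.restrict_mono hcov le_rfl) (le_refl _)
    _ ≤ ∑' n, ∫⁻ y in A n, ENNReal.ofReal ((dist x y ^ (e+2))⁻¹) ∂μH[((e+2:ℕ):ℝ)-1] :=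
        lintegral_iUnion_le _ _
    _ ≤ ∑' n : ℕ, ENNReal.ofReal (K0 * 2^(2*e+3) * ρ/δ^2 * ((4:ℝ)⁻¹)^n) :=
        ENNReal.tsum_le_tsum hshell
    _ ≤ ∑' n : ℕ, ENNReal.ofReal (K0 * 2^(2*e+3) * ρ/δ^2) * (2:ℝ≥0∞)⁻¹^n := by
        apply ENNReal.tsum_le_tsum
        intro n
        rw [ENNReal.ofReal_mul (by positivity), ENNReal.ofReal_pow (by norm_num)]
        gcongr
        rw [ENNReal.ofReal_inv_of_pos (by norm_num), ENNReal.ofReal_ofNat]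
        exact ENNReal.inv_le_inv.mpr (by norm_num)
    _ = ENNReal.ofReal (K0 * 2^(2*e+3) * ρ/δ^2) * 2 := by
        rw [ENNReal.tsum_mul_left, ENNReal.tsum_geometric, ENNReal.one_sub_inv_two, inv_inv]
    _ ≤ ENNReal.ofReal (K0 * 2^(2*(e+2)) * ρ/δ^2) := by
        rw [← ENNReal.ofReal_ofNat 2, ← ENNReal.ofReal_mul (by positivity)]
        apply ENNReal.ofReal_le_ofReal
        have h1 : (2:ℝ)^(2*(e+2)) = 2^(2*e+3) * 2 := by
          rw [show 2*(e+2) = (2*e+3)+1 by ring, pow_succ]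
        rw [h1]
        ring_nf
        exact le_refl _

lemma exists_unit_orthogonal (d : ℕ) (hd : 2 ≤ d) (nv : E d) (hn : ‖nv‖ = 1) :
    ∃ v : E d, ‖v‖ = 1 ∧ ⟪nv, v⟫ = 0 := by
  obtain ⟨e, rfl⟩ : ∃ e, d = e + 2 := ⟨d - 2, by omega⟩
  have hcard : Module.finrank ℝ (E (e+2)) = Fintype.card (Fin (e+2)) := by
    simp [finrank_euclideanSpace]
  set v : Fin (e+2) → E (e+2) := fun _ => nv with hv
  have hon : Orthonormal ℝ (({0} : Set (Fin (e+2))).restrict v) := by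
    constructor
    · rintro ⟨i, rfl⟩; show ‖v 0‖ = 1; exact hn
    · rintro ⟨i, hi⟩ ⟨j, hj⟩ hij
      simp only [Set.mem_singleton_iff] at hi hj
      exact absurd (Subtype.ext (hi.trans hj.symm)) hij
  obtain ⟨B, hB⟩ := hon.exists_orthonormalBasis_extension_of_card_eq hcard
  have h01 : (0 : Fin (e+2)) ≠ 1 := by simp [Fin.ext_iff]
  refine ⟨B 1, B.orthonormal.1 1, ?_⟩
  have h2 : ⟪B 0, B 1⟫ = 0 := B.orthonormal.2 h01
  rw [hB 0 rfl] at h2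
  exact h2

/-- If the Poisson kernel on a face Π of a bounded convex polygonal domain D (of diameter ≤ 1)
satisfies |P(x,y)| ≤ C₀ d(x)/|x−y|^d for a.e. y ∈ Π, then the integral of |P(x,·)| over the
ρ-strip Π_ρ near the relative boundary of Π is bounded by C ρ/d(x), for all x ∈ D with
d(x) ≥ 2ρ, with C independent of x and ρ. -/
theorem stmt6 (d : ℕ) (hd : 2 ≤ d) (N : ℕ)
    (ν : Fin N → EuclideanSpace ℝ (Fin d)) (c : Fin N → ℝ) (hν : ∀ j, ‖ν j‖ = 1)
    (D : Set (EuclideanSpace ℝ (Fin d)))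
    (hD : D = ⋂ j, {x | c j < ⟪ν j, x⟫})
    (hDb : Bornology.IsBounded D) (hDne : D.Nonempty) (hdiam : Metric.diam D ≤ 1)
    (k : Fin N) (Pi' : Set (EuclideanSpace ℝ (Fin d)))
    (hPi : Pi' = {x | ⟪ν k, x⟫ = c k} ∩ ⋂ j ∈ {j | j ≠ k}, {x | c j < ⟪ν j, x⟫})
    (P : EuclideanSpace ℝ (Fin d) → EuclideanSpace ℝ (Fin d) → ℝ) (C₀ : ℝ)
    (hP : ∀ x ∈ D, ∀ᵐ y ∂((μH[(d:ℝ) - 1]).restrict Pi'),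
      |P x y| ≤ C₀ * infDist x (frontier D) / dist x y ^ d) :
    ∃ C : ℝ, ∀ ρ : ℝ, 0 < ρ → ∀ x ∈ D, 2 * ρ ≤ infDist x (frontier D) →
      ∫ y in {y ∈ Pi' | infDist y (closure Pi' \ Pi') ≤ ρ}, |P x y| ∂(μH[(d:ℝ) - 1])
        ≤ C * ρ / infDist x (frontier D) := by
  classical
  -- notation
  set U : Set (EuclideanSpace ℝ (Fin d)) := ⋂ j ∈ {j | j ≠ k}, {x | c j < ⟪ν j, x⟫} with hU
  have hUopen : IsOpen U := by
    rw [hU]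
    exact Set.Finite.isOpen_biInter (Set.toFinite _)
      (fun j _ => isOpen_lt continuous_const (continuous_const.inner continuous_id))
  have hHclosed : IsClosed {x : EuclideanSpace ℝ (Fin d) | ⟪ν k, x⟫ = c k} :=
    isClosed_eq (continuous_const.inner continuous_id) continuous_const
  have hDopen : IsOpen D := by
    rw [hD]
    exact isOpen_iInter_of_finite
      (fun j => isOpen_lt continuous_const (continuous_const.inner continuous_id))
  -- Pi' ⊆ frontier D
  have hPifr : Pi' ⊆ frontier D := by
    intro y hy
    rw [hPi] at hy
    obtain ⟨hyH, hyU⟩ := hy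
    rw [hDopen.frontier_eq]
    constructor
    · -- y ∈ closure D
      have hcont : Continuous (fun t : ℝ => y + t • ν k) :=
        continuous_const.add (continuous_id.smul continuous_const)
      have htd0 : Filter.Tendsto (fun t : ℝ => y + t • ν k) (nhds 0) (nhds y) :=
        hcont.tendsto' 0 y (by simp)
      have htd : Filter.Tendsto (fun t : ℝ => y + t • ν k) (nhdsWithin 0 (Set.Ioi 0)) (nhds y) :=
        htd0.mono_left nhdsWithin_le_nhds
      apply mem_closure_of_tendsto htd
      have hev1 : ∀ᶠ t in nhds (0:ℝ), (y + t • ν k) ∈ U :=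
        htd0.eventually_mem (hUopen.mem_nhds hyU)
      filter_upwards [hev1.filter_mono nhdsWithin_le_nhds, self_mem_nhdsWithin] with t htU htpos
      rw [hD, Set.mem_iInter]
      intro j
      by_cases hjk : j = k
      · subst hjk
        simp only [Set.mem_setOf_eq, inner_add_right, real_inner_smul_right]
        have : ⟪ν j, ν j⟫ = 1 := by
          rw [real_inner_self_eq_norm_sq, hν j]; norm_num
        rw [hyH, this]
        have : (0:ℝ) < t := htpos
        linarith
      · exact Set.mem_iInter₂.mp htU j hjk
    · -- y ∉ D
      intro hyD
      rw [hD, Set.mem_iInter] at hyD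
      have := hyD k
      simp only [Set.mem_setOf_eq] at this
      rw [hyH] at this
      exact lt_irrefl _ this
  -- closure of Pi' is contained in the closed version
  have hclosPi : closure Pi' ⊆ {x : EuclideanSpace ℝ (Fin d) | ⟪ν k, x⟫ = c k} ∩
      ⋂ j ∈ {j | j ≠ k}, {x | c j ≤ ⟪ν j, x⟫} := by
    apply closure_minimal
    · rw [hPi]
      intro y hy
      refine ⟨hy.1, Set.mem_iInter₂.mpr fun j hj => ?_⟩
      have hlt : c j < ⟪ν j, y⟫ := Set.mem_iInter₂.mp hy.2 j hj
      exact hlt.le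
    · exact hHclosed.inter (isClosed_biInter
        (fun j _ => isClosed_le continuous_const (continuous_const.inner continuous_id)))
  -- nonemptiness of the relative boundary
  have hbdry : Pi'.Nonempty → (closure Pi' \ Pi').Nonempty := by
    rintro ⟨y₀, hy₀⟩
    by_contra hKe
    rw [Set.not_nonempty_iff_eq_empty, Set.diff_eq_empty] at hKe
    have hclosed : IsClosed Pi' := isClosed_of_closure_subset hKe
    obtain ⟨v, hv1, hv2⟩ := exists_unit_orthogonal d hd (ν k) (hν k)
    set st := {t : ℝ | y₀ + t • v ∈ Pi'} with hst
    have hst0 : (0:ℝ) ∈ st := by simpa [hst] using hy₀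
    have hstC : IsClosed st :=
      hclosed.preimage (continuous_const.add (continuous_id.smul continuous_const))
    have hPib : Bornology.IsBounded Pi' :=
      (hDb.closure.subset (hPifr.trans (by rw [hDopen.frontier_eq]; exact Set.diff_subset)))
    obtain ⟨R, hR⟩ := (Metric.isBounded_iff_subset_closedBall 0).mp hPib
    have hstB : BddAbove st := by
      refine ⟨R + ‖y₀‖, fun t ht => ?_⟩
      have hp : y₀ + t • v ∈ Metric.closedBall 0 R := hR ht
      rw [Metric.mem_closedBall, dist_zero_right] at hp
      have h1 : |t| = ‖t • v‖ := by rw [norm_smul, hv1, mul_one, Real.norm_eq_abs]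
      have h2 : ‖t • v‖ ≤ ‖y₀ + t • v‖ + ‖y₀‖ := by
        have := norm_sub_le (y₀ + t • v) y₀
        simpa using this
      calc t ≤ |t| := le_abs_self t
        _ ≤ ‖y₀ + t • v‖ + ‖y₀‖ := by rw [h1]; exact h2
        _ ≤ R + ‖y₀‖ := by linarith
    have hsup := hstC.csSup_mem ⟨0, hst0⟩ hstB
    set t₀ := sSup st with ht₀
    have hz₀ : y₀ + t₀ • v ∈ Pi' := hsup
    rw [hPi] at hz₀
    obtain ⟨hz₀H, hz₀U⟩ := hz₀
    obtain ⟨ε, hε, hball⟩ := Metric.isOpen_iff.mp hUopen _ hz₀U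
    have hmem : t₀ + ε/2 ∈ st := by
      rw [hst, Set.mem_setOf_eq, hPi]
      have heq : y₀ + (t₀ + ε/2) • v = (y₀ + t₀ • v) + (ε/2) • v := by
        rw [add_smul]; abel
      constructor
      · rw [heq]
        have hz₀H' : ⟪ν k, y₀ + t₀ • v⟫ = c k := hz₀H
        simp only [Set.mem_setOf_eq, inner_add_right, real_inner_smul_right, hv2] at hz₀H' ⊢
        linarith
      · rw [heq]
        apply hball
        rw [Metric.mem_ball, dist_eq_norm]
        simp only [add_sub_cancel_left]
        rw [norm_smul, hv1, mul_one, Real.norm_eq_abs, abs_of_pos (by linarith)]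
        linarith
    have := le_csSup hstB hmem
    linarith
  -- the constant
  set Λ : ℝ := Real.sqrt (d-1:ℕ) ^ (d-1) * 2^(2*d) with hΛ
  have hΛnn : 0 ≤ Λ := by positivity
  set C₀' : ℝ := max C₀ 0 with hC₀'
  have hC₀'nn : 0 ≤ C₀' := le_max_right _ _
  refine ⟨2 * C₀' * Λ * N, ?_⟩
  intro ρ hρ x hx hδρ
  set δ := infDist x (frontier D) with hδdef
  have hδ : 0 < δ := lt_of_lt_of_le (by linarith) hδρ
  set S : Set (EuclideanSpace ℝ (Fin d)) :=
    {y ∈ Pi' | infDist y (closure Pi' \ Pi') ≤ ρ} with hS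
  have hRHSnn : 0 ≤ 2 * C₀' * Λ * N * ρ / δ := by positivity
  have hSsub : S ⊆ Pi' := fun y hy => hy.1
  -- distance lower bound on Pi'
  have hdistlb : ∀ y ∈ Pi', δ ≤ dist x y := fun y hy => infDist_le_dist_of_mem (hPifr hy)
  -- slab data
  set w : Fin N → EuclideanSpace ℝ (Fin d) := fun j => ν j - ⟪ν k, ν j⟫ • ν k with hw
  set T : Fin N → Set (EuclideanSpace ℝ (Fin d)) := fun j =>
    if w j = 0 then ∅ else
      {y | ⟪ν k, y⟫ = c k ∧
        |⟪‖w j‖⁻¹ • w j, y⟫ - ‖w j‖⁻¹ * (c j - ⟪ν k, ν j⟫ * c k)| ≤ 2*ρ ∧ δ ≤ dist x y} with hT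
  -- the covering
  have hScov : S ⊆ ⋃ j, T j := by
    intro y hy
    obtain ⟨hyPi, hyρ⟩ := hy
    have hKne := hbdry ⟨y, hyPi⟩
    have hlt : infDist y (closure Pi' \ Pi') < 2*ρ := lt_of_le_of_lt hyρ (by linarith)
    obtain ⟨z, hzK, hzd⟩ := (Metric.infDist_lt_iff hKne).mp hlt
    have hzcl := hclosPi hzK.1
    have hzH : ⟪ν k, z⟫ = c k := hzcl.1
    have hzge : ∀ j, j ≠ k → c j ≤ ⟪ν j, z⟫ := fun j hj => Set.mem_iInter₂.mp hzcl.2 j hj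
    have hzn : ∃ j, j ≠ k ∧ ⟪ν j, z⟫ = c j := by
      by_contra hno
      push_neg at hno
      apply hzK.2
      rw [hPi]
      exact ⟨hzH, Set.mem_iInter₂.mpr fun j hj =>
        lt_of_le_of_ne (hzge j hj) (fun hc => hno j hj hc.symm)⟩
    obtain ⟨j, hjk, hje⟩ := hzn
    have hyPi' := hyPi
    rw [hPi] at hyPi'
    obtain ⟨hyH, hyU⟩ := hyPi'
    have hyj : c j < ⟪ν j, y⟫ := Set.mem_iInter₂.mp hyU j hjk
    have hwj : w j ≠ 0 := by
      intro h0
      rw [hw] at h0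
      have hνj : ν j = ⟪ν k, ν j⟫ • ν k := by
        have := sub_eq_zero.mp h0
        exact this
      have hyH' : ⟪ν k, y⟫ = c k := hyH
      have e1 : ⟪ν j, y⟫ = ⟪ν k, ν j⟫ * c k := by
        conv_lhs => rw [hνj]
        rw [real_inner_smul_left, hyH']
      have e2 : ⟪ν j, z⟫ = ⟪ν k, ν j⟫ * c k := by
        conv_lhs => rw [hνj]
        rw [real_inner_smul_left, hzH]
      rw [e1] at hyj
      rw [e2] at hje
      linarith
    refine Set.mem_iUnion.mpr ⟨j, ?_⟩
    rw [hT]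
    simp only [if_neg hwj]
    refine ⟨hyH, ?_, hdistlb y hyPi⟩
    have hwz : ⟪w j, z⟫ = c j - ⟪ν k, ν j⟫ * c k := by
      rw [hw]
      simp only [inner_sub_left, real_inner_smul_left]
      rw [hje, hzH]
    have hkey : ⟪‖w j‖⁻¹ • w j, y⟫ - ‖w j‖⁻¹ * (c j - ⟪ν k, ν j⟫ * c k)
        = ⟪‖w j‖⁻¹ • w j, y - z⟫ := by
      rw [inner_sub_right, real_inner_smul_left, real_inner_smul_left, hwz]
    rw [hkey]
    have hwn : ‖w j‖ ≠ 0 := norm_ne_zero_iff.mpr hwj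
    have hwunit : ‖‖w j‖⁻¹ • w j‖ = 1 := by
      rw [norm_smul, norm_inv, norm_norm, inv_mul_cancel₀ hwn]
    have hCS := abs_real_inner_le_norm (‖w j‖⁻¹ • w j) (y - z)
    rw [hwunit, one_mul] at hCS
    calc |⟪‖w j‖⁻¹ • w j, y - z⟫| ≤ ‖y - z‖ := hCS
      _ = dist y z := (dist_eq_norm y z).symm
      _ ≤ 2*ρ := hzd.le
  -- measurability of S
  have hPimeas : MeasurableSet Pi' := by
    rw [hPi]
    exact hHclosed.measurableSet.inter hUopen.measurableSet
  have hSmeas : MeasurableSet S := by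
    have : S = Pi' ∩ {y | infDist y (closure Pi' \ Pi') ≤ ρ} := by
      rw [hS]; ext y; simp [Set.mem_sep_iff, Set.mem_inter_iff]
    rw [this]
    exact hPimeas.inter
      ((isClosed_le (Metric.continuous_infDist_pt _) continuous_const).measurableSet)
  -- reduce to lintegral
  by_cases hInt : Integrable (fun y => |P x y|) (μH[(d:ℝ)-1].restrict S)
  swap
  · rw [integral_undef hInt]
    exact hRHSnn
  rw [integral_eq_lintegral_of_nonneg_ae (Filter.Eventually.of_forall fun y => abs_nonneg _)
    hInt.aestronglyMeasurable]
  apply ENNReal.toReal_le_of_le_ofReal hRHSnn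
  -- a.e. bound
  have hae : ∀ᵐ y ∂(μH[(d:ℝ)-1].restrict S),
      ENNReal.ofReal |P x y| ≤ ENNReal.ofReal (C₀' * δ * (dist x y ^ d)⁻¹) := by
    have h1 := (hP x hx).filter_mono (ae_mono (Measure.restrict_mono hSsub le_rfl))
    have h2 : ∀ᵐ y ∂(μH[(d:ℝ)-1].restrict S), y ∈ S := ae_restrict_mem hSmeas
    filter_upwards [h1, h2] with y hy1 hy2
    apply ENNReal.ofReal_le_ofReal
    have hdy : δ ≤ dist x y := hdistlb y (hSsub hy2)
    have hq : 0 < dist x y ^ d := pow_pos (lt_of_lt_of_le hδ hdy) d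
    calc |P x y| ≤ C₀ * δ / dist x y ^ d := hy1
      _ ≤ C₀' * δ / dist x y ^ d :=
          div_le_div_of_nonneg_right (mul_le_mul_of_nonneg_right (le_max_left _ _) hδ.le) hq.le
      _ = C₀' * δ * (dist x y ^ d)⁻¹ := by rw [div_eq_mul_inv]
  -- per-j estimate
  have hperj : ∀ j : Fin N, ∫⁻ y in T j, ENNReal.ofReal (C₀' * δ * (dist x y ^ d)⁻¹)
      ∂μH[(d:ℝ)-1] ≤ ENNReal.ofReal (2 * C₀' * Λ * ρ / δ) := by
    intro j
    by_cases hwj : w j = 0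
    · rw [hT]
      simp only [if_pos hwj]
      rw [Measure.restrict_empty, lintegral_zero_measure]
      exact bot_le
    · rw [hT]
      simp only [if_neg hwj]
      have hwn : ‖w j‖ ≠ 0 := norm_ne_zero_iff.mpr hwj
      have hwunit : ‖‖w j‖⁻¹ • w j‖ = 1 := by
        rw [norm_smul, norm_inv, norm_norm, inv_mul_cancel₀ hwn]
      have hoth : ⟪ν k, ‖w j‖⁻¹ • w j⟫ = 0 := by
        rw [real_inner_smul_right]
        have : ⟪ν k, w j⟫ = 0 := by
          rw [hw]
          simp only [inner_sub_right, real_inner_smul_right]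
          have : ⟪ν k, ν k⟫ = 1 := by
            rw [real_inner_self_eq_norm_sq, hν k]; norm_num
          rw [this]; ring
        rw [this, mul_zero]
      have hsb := shellBound d hd (ν k) (‖w j‖⁻¹ • w j) x (hν k) hwunit hoth (c k)
        (‖w j‖⁻¹ * (c j - ⟪ν k, ν j⟫ * c k)) (2*ρ) δ (by linarith) hδ
      calc ∫⁻ y in {y | ⟪ν k, y⟫ = c k ∧
            |⟪‖w j‖⁻¹ • w j, y⟫ - ‖w j‖⁻¹ * (c j - ⟪ν k, ν j⟫ * c k)| ≤ 2*ρ ∧ δ ≤ dist x y},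
            ENNReal.ofReal (C₀' * δ * (dist x y ^ d)⁻¹) ∂μH[(d:ℝ)-1]
          = ENNReal.ofReal (C₀' * δ) * ∫⁻ y in {y | ⟪ν k, y⟫ = c k ∧
            |⟪‖w j‖⁻¹ • w j, y⟫ - ‖w j‖⁻¹ * (c j - ⟪ν k, ν j⟫ * c k)| ≤ 2*ρ ∧ δ ≤ dist x y},
            ENNReal.ofReal ((dist x y ^ d)⁻¹) ∂μH[(d:ℝ)-1] := by
            rw [← lintegral_const_mul' _ _ ENNReal.ofReal_ne_top]
            apply lintegral_congr
            intro y
            rw [← ENNReal.ofReal_mul (by positivity)]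
        _ ≤ ENNReal.ofReal (C₀' * δ) * ENNReal.ofReal (Λ * (2*ρ) / δ^2) := by
            apply mul_le_mul_right
            calc _ ≤ ENNReal.ofReal (Real.sqrt (d-1:ℕ) ^ (d-1) * 2^(2*d) * (2*ρ) / δ^2) := hsb
              _ = ENNReal.ofReal (Λ * (2*ρ) / δ^2) := by rw [hΛ]
        _ ≤ ENNReal.ofReal (2 * C₀' * Λ * ρ / δ) := by
            rw [← ENNReal.ofReal_mul (by positivity)]
            apply ENNReal.ofReal_le_ofReal
            have : C₀' * δ * (Λ * (2*ρ) / δ^2) = 2 * C₀' * Λ * ρ / δ := by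
              field_simp
            rw [this]
  -- put it together
  calc ∫⁻ y in S, ENNReal.ofReal |P x y| ∂μH[(d:ℝ)-1]
      ≤ ∫⁻ y in S, ENNReal.ofReal (C₀' * δ * (dist x y ^ d)⁻¹) ∂μH[(d:ℝ)-1] :=
        lintegral_mono_ae hae
    _ ≤ ∫⁻ y in ⋃ j, T j, ENNReal.ofReal (C₀' * δ * (dist x y ^ d)⁻¹) ∂μH[(d:ℝ)-1] :=
        lintegral_mono' (Measure.restrict_mono hScov le_rfl) (le_refl _)
    _ ≤ ∑' j, ∫⁻ y in T j, ENNReal.ofReal (C₀' * δ * (dist x y ^ d)⁻¹) ∂μH[(d:ℝ)-1] :=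
        lintegral_iUnion_le _ _
    _ = ∑ j, ∫⁻ y in T j, ENNReal.ofReal (C₀' * δ * (dist x y ^ d)⁻¹) ∂μH[(d:ℝ)-1] :=
        tsum_fintype _
    _ ≤ ∑ _j : Fin N, ENNReal.ofReal (2 * C₀' * Λ * ρ / δ) :=
        Finset.sum_le_sum (fun j _ => hperj j)
    _ = (N : ℝ≥0∞) * ENNReal.ofReal (2 * C₀' * Λ * ρ / δ) := by
        rw [Finset.sum_const, Finset.card_univ, Fintype.card_fin, nsmul_eq_mul]
    _ ≤ ENNReal.ofReal (2 * C₀' * Λ * N * ρ / δ) := by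
        rw [← ENNReal.ofReal_natCast N, ← ENNReal.ofReal_mul (by positivity)]
        apply ENNReal.ofReal_le_ofReal
        have : (N:ℝ) * (2 * C₀' * Λ * ρ / δ) = 2 * C₀' * Λ * N * ρ / δ := by ring
        rw [this]
end

section
/- Let D be a bounded convex polygon in ℝ^d written as D = ⋂_{j=1}^N {x : ν_j · x > c_j} with unit normals ν_j, and let Π be a (d−1)-dimensional face of D lying in {ν · x = c} with ν_k ≠ 0 for some fixed k. Then for every small ρ > 0 there exist finitely many measurable sets Γ₁,...,Γ_M ⊂ Π with pairwise disjoint relative interiors and a measurable set E ⊂ Π such that: (i) E ⊂ {y ∈ Π : dist(y, ∂Π) ≤ c₀ ρ} for a constant c₀ independent of ρ; (ii) Π \ E = ⋃_j Γ_j and each projection π_k(Γ_j) is a (d−1)-dimensional cube of side length ρ with vertices in the lattice π_k(ρ ℤ^d); (iii) c₁ ρ^{d−1} ≤ H^{d−1}(Γ_j) ≤ c₂ ρ^{d−1} and c₁ ρ ≤ diam(Γ_j) ≤ c₂ ρ, with c₁, c₂ independent of ρ. -/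
open MeasureTheory Metric Bornology
open scoped RealInnerProductSpace NNReal ENNReal

namespace S7
variable {d : ℕ}

lemma abs_coord_le (x : EuclideanSpace ℝ (Fin d)) (i : Fin d) : |x i| ≤ ‖x‖ := by
  rw [EuclideanSpace.norm_eq, ← Real.sqrt_sq_eq_abs]
  refine Real.sqrt_le_sqrt ?_
  have := Finset.single_le_sum (f := fun j => ‖x j‖ ^ 2) (fun j _ => by positivity)
    (Finset.mem_univ i)
  simpa [Real.norm_eq_abs, sq_abs] using this

lemma norm_le_of_coords {x : EuclideanSpace ℝ (Fin d)} {r : ℝ} (hr : 0 ≤ r)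
    (h : ∀ i, |x i| ≤ r) : ‖x‖ ≤ d * r := by
  rw [EuclideanSpace.norm_eq]
  have h1 : ∑ i, ‖x i‖ ^ 2 ≤ (d : ℝ) * r ^ 2 := by
    calc ∑ i, ‖x i‖ ^ 2 ≤ ∑ _i : Fin d, r ^ 2 := by
          refine Finset.sum_le_sum fun i _ => ?_
          have := h i
          rw [Real.norm_eq_abs]
          nlinarith [abs_nonneg (x i)]
      _ = (d : ℝ) * r ^ 2 := by simp [Finset.sum_const, nsmul_eq_mul]
  calc Real.sqrt (∑ i, ‖x i‖ ^ 2) ≤ Real.sqrt ((d:ℝ) * r ^ 2) := Real.sqrt_le_sqrt h1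
    _ ≤ Real.sqrt (((d:ℝ) * r) ^ 2) := by
        refine Real.sqrt_le_sqrt ?_
        have hdd : (d:ℝ) ≤ (d:ℝ) ^ 2 := by
          exact_mod_cast Nat.le_self_pow (by norm_num) d
        nlinarith [sq_nonneg r, Nat.cast_nonneg (α := ℝ) d]
    _ = d * r := Real.sqrt_sq (by positivity)

lemma norm_le_norm_of_coords {x y : EuclideanSpace ℝ (Fin d)}
    (h : ∀ i, |x i| ≤ |y i|) : ‖x‖ ≤ ‖y‖ := by
  rw [EuclideanSpace.norm_eq, EuclideanSpace.norm_eq]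
  refine Real.sqrt_le_sqrt (Finset.sum_le_sum fun i _ => ?_)
  have := h i
  simp only [Real.norm_eq_abs]
  nlinarith [abs_nonneg (x i)]


def cube (k : Fin d) (ρ : ℝ) (z : Fin d → ℤ) : Set (EuclideanSpace ℝ (Fin d)) :=
  {x : EuclideanSpace ℝ (Fin d) | x k = 0 ∧
    ∀ i, i ≠ k → x i ∈ Set.Icc (ρ * z i) (ρ * z i + ρ)}

def Fmap (k : Fin d) (x : EuclideanSpace ℝ (Fin d)) : {i : Fin d // i ≠ k} → ℝ :=
  fun i => x i.1

def Gmap (k : Fin d) (u : {i : Fin d // i ≠ k} → ℝ) : EuclideanSpace ℝ (Fin d) :=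
  WithLp.toLp 2 (fun i => if h : i = k then 0 else u ⟨i, h⟩)

lemma Gmap_apply_ne (k : Fin d) (u) {i : Fin d} (h : i ≠ k) : Gmap k u i = u ⟨i, h⟩ := by
  simp [Gmap, h]

lemma Gmap_apply_k (k : Fin d) (u) : Gmap k u k = 0 := by simp [Gmap]

lemma Fmap_Gmap (k : Fin d) (u : {i : Fin d // i ≠ k} → ℝ) : Fmap k (Gmap k u) = u := by
  funext i
  simp [Fmap, Gmap, i.2]

lemma Gmap_Fmap {k : Fin d} {x : EuclideanSpace ℝ (Fin d)} (hx : x k = 0) :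
    Gmap k (Fmap k x) = x := by
  ext i
  by_cases h : i = k
  · subst h; simp [Gmap, hx]
  · simp [Gmap, Fmap, h]

lemma lipschitz_Fmap (k : Fin d) : LipschitzWith 1 (Fmap (d := d) k) := by
  refine LipschitzWith.of_dist_le_mul fun x y => ?_
  rw [NNReal.coe_one, one_mul]
  refine dist_pi_le_iff dist_nonneg |>.2 fun i => ?_
  have : |x i.1 - y i.1| ≤ ‖x - y‖ := by
    have := abs_coord_le (x - y) i.1
    simpa using this
  simpa [Fmap, Real.dist_eq, dist_eq_norm] using this

lemma lipschitz_Gmap (k : Fin d) : LipschitzWith d (Gmap (d := d) k) := by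
  refine LipschitzWith.of_dist_le_mul fun u v => ?_
  rw [dist_eq_norm]
  have : ∀ i, |(Gmap k u - Gmap k v) i| ≤ dist u v := by
    intro i
    by_cases h : i = k
    · subst h
      simp [Gmap, dist_nonneg]
    · have h1 : (Gmap k u - Gmap k v) i = u ⟨i, h⟩ - v ⟨i, h⟩ := by
        simp [Gmap, h]
      rw [h1]
      have := dist_le_pi_dist u v ⟨i, h⟩
      simpa [Real.dist_eq] using this
  have := norm_le_of_coords dist_nonneg this
  simpa using this

lemma Gmap_image (k : Fin d) (ρ : ℝ) (z : Fin d → ℤ) :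
    Gmap k '' (Set.pi Set.univ fun i : {i : Fin d // i ≠ k} =>
        Set.Icc (ρ * z i.1) (ρ * z i.1 + ρ)) = cube k ρ z := by
  ext x
  constructor
  · rintro ⟨u, hu, rfl⟩
    refine ⟨Gmap_apply_k k u, fun i hi => ?_⟩
    rw [Gmap_apply_ne k u hi]
    exact hu ⟨i, hi⟩ (Set.mem_univ _)
  · rintro ⟨hk, hi⟩
    refine ⟨Fmap k x, fun i _ => ?_, Gmap_Fmap hk⟩
    exact hi i.1 i.2

lemma Fmap_image_cube (k : Fin d) (ρ : ℝ) (z : Fin d → ℤ) :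
    Fmap k '' cube k ρ z = Set.pi Set.univ fun i : {i : Fin d // i ≠ k} =>
        Set.Icc (ρ * z i.1) (ρ * z i.1 + ρ) := by
  rw [← Gmap_image, Set.image_image]
  have : ∀ u, Fmap k (Gmap (d := d) k u) = u := Fmap_Gmap k
  simp only [this, Set.image_id']


lemma card_ne (hd : 2 ≤ d) (k : Fin d) : Fintype.card {i : Fin d // i ≠ k} = d - 1 := by
  simp [Fintype.card_subtype_compl]

lemma cast_pred (hd : 2 ≤ d) : ((d - 1 : ℕ) : ℝ) = (d : ℝ) - 1 := by
  have : 1 ≤ d := by omega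
  push_cast [this]
  ring

lemma exp_nonneg (hd : 2 ≤ d) : (0:ℝ) ≤ (d:ℝ) - 1 := by
  have : (2:ℝ) ≤ d := by exact_mod_cast hd
  linarith

lemma volume_box (k : Fin d) {ρ : ℝ} (hρ : 0 < ρ) (z : Fin d → ℤ) :
    volume (Set.pi Set.univ fun i : {i : Fin d // i ≠ k} =>
        Set.Icc (ρ * z i.1) (ρ * z i.1 + ρ)) = ENNReal.ofReal (ρ ^ (Fintype.card {i : Fin d // i ≠ k})) := by
  rw [volume_pi_pi]
  simp only [Real.volume_Icc, add_sub_cancel_left]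
  rw [Finset.prod_const, ← ENNReal.ofReal_pow hρ.le]
  simp

lemma hausdorff_box (hd : 2 ≤ d) (k : Fin d) {ρ : ℝ} (hρ : 0 < ρ) (z : Fin d → ℤ) :
    μH[(d:ℝ)-1] (Set.pi Set.univ fun i : {i : Fin d // i ≠ k} =>
        Set.Icc (ρ * z i.1) (ρ * z i.1 + ρ)) = ENNReal.ofReal (ρ ^ (d - 1)) := by
  have h1 : (d:ℝ) - 1 = ((Fintype.card {i : Fin d // i ≠ k} : ℕ) : ℝ) := by
    rw [card_ne hd k, cast_pred hd]
  rw [h1, hausdorffMeasure_pi_real, volume_box k hρ z, card_ne hd k]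


lemma cube_compact (k : Fin d) (ρ : ℝ) (z : Fin d → ℤ) : IsCompact (cube k ρ z) := by
  rw [← Gmap_image]
  exact ((isCompact_univ_pi fun i => isCompact_Icc).image (lipschitz_Gmap k).continuous)

lemma hausdorff_cube_le (hd : 2 ≤ d) (k : Fin d) {ρ : ℝ} (hρ : 0 < ρ) (z : Fin d → ℤ) :
    μH[(d:ℝ)-1] (cube k ρ z) ≤ ENNReal.ofReal ((d:ℝ) ^ (d-1) * ρ ^ (d - 1)) := by
  rw [← Gmap_image]
  calc μH[(d:ℝ)-1] (Gmap k '' _)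
      ≤ ((d : ℝ≥0) : ℝ≥0∞) ^ ((d:ℝ)-1) * μH[(d:ℝ)-1] (Set.pi Set.univ fun i : {i : Fin d // i ≠ k} =>
        Set.Icc (ρ * z i.1) (ρ * z i.1 + ρ)) :=
        (lipschitz_Gmap k).hausdorffMeasure_image_le (exp_nonneg hd) _
    _ ≤ ENNReal.ofReal ((d:ℝ) ^ (d-1) * ρ ^ (d - 1)) := by
        rw [hausdorff_box hd k hρ z]
        have h1 : ((d : ℝ≥0) : ℝ≥0∞) ^ ((d:ℝ)-1) = ENNReal.ofReal ((d:ℝ) ^ (d-1)) := by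
          rw [← cast_pred hd, ENNReal.rpow_natCast]
          have h2 : ((d : ℝ≥0) : ℝ≥0∞) = ENNReal.ofReal (d:ℝ) := by
            simp [ENNReal.ofReal_natCast]
          rw [h2, ← ENNReal.ofReal_pow (by positivity)]
        rw [h1, ← ENNReal.ofReal_mul (by positivity)]

lemma hausdorff_cube_ge (hd : 2 ≤ d) (k : Fin d) {ρ : ℝ} (hρ : 0 < ρ) (z : Fin d → ℤ) :
    ENNReal.ofReal (ρ ^ (d - 1)) ≤ μH[(d:ℝ)-1] (cube k ρ z) := by
  have := (lipschitz_Fmap k).hausdorffMeasure_image_le (exp_nonneg hd) (cube k ρ z)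
  rw [Fmap_image_cube, hausdorff_box hd k hρ z] at this
  simpa using this


lemma cube_dist_le (k : Fin d) {ρ : ℝ} (hρ : 0 < ρ) (z : Fin d → ℤ)
    {x y : EuclideanSpace ℝ (Fin d)} (hx : x ∈ cube k ρ z) (hy : y ∈ cube k ρ z) :
    dist x y ≤ d * ρ := by
  rw [dist_eq_norm]
  refine norm_le_of_coords hρ.le fun i => ?_
  by_cases h : i = k
  · subst h
    simp [hx.1, hy.1, hρ.le]
  · have h1 := hx.2 i h
    have h2 := hy.2 i h
    simp only [Set.mem_Icc] at h1 h2
    have : (x - y) i = x i - y i := by simp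
    rw [this, abs_le]
    constructor <;> linarith

lemma cube_diam_le (k : Fin d) {ρ : ℝ} (hρ : 0 < ρ) (z : Fin d → ℤ) :
    diam (cube k ρ z) ≤ d * ρ := by
  refine diam_le_of_forall_dist_le (by positivity) fun x hx y hy => cube_dist_le k hρ z hx hy

lemma corner_mem_cube (k : Fin d) {ρ : ℝ} (hρ : 0 < ρ) (z : Fin d → ℤ) :
    Gmap k (fun i => ρ * z i.1) ∈ cube k ρ z := by
  refine ⟨Gmap_apply_k _ _, fun i hi => ?_⟩
  rw [Gmap_apply_ne k _ hi]
  exact ⟨le_refl _, by linarith⟩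

lemma cube_diam_ge (hd : 2 ≤ d) (k : Fin d) {ρ : ℝ} (hρ : 0 < ρ) (z : Fin d → ℤ) :
    ρ ≤ diam (cube k ρ z) := by
  have : Nontrivial (Fin d) := by
    rw [Fin.nontrivial_iff_two_le]; exact hd
  obtain ⟨i₀, hi₀⟩ := exists_ne k
  set x := Gmap k (fun i => ρ * z i.1) with hxdef
  set y := Gmap k (fun i : {i : Fin d // i ≠ k} => if i.1 = i₀ then ρ * z i.1 + ρ else ρ * z i.1) with hydef
  have hx : x ∈ cube k ρ z := corner_mem_cube k hρ z
  have h1' : x i₀ = ρ * z i₀ := by rw [hxdef]; exact Gmap_apply_ne k _ hi₀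
  have hy : y ∈ cube k ρ z := by
    refine ⟨by rw [hydef]; exact Gmap_apply_k _ _, fun i hi => ?_⟩
    rw [hydef, Gmap_apply_ne k _ hi]
    by_cases h : i = i₀ <;> simp [h, Set.mem_Icc] <;> first | linarith | (constructor <;> linarith)
  have hdist : ρ ≤ dist x y := by
    rw [dist_eq_norm]
    calc ρ = |(x - y) i₀| := by
          have h1 : x i₀ = ρ * z i₀ := h1'
          have h2 : y i₀ = ρ * z i₀ + ρ := by
            rw [hydef, Gmap_apply_ne k _ hi₀]; simp
          have : (x - y) i₀ = x i₀ - y i₀ := by simp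
          rw [this, h1, h2]
          rw [abs_of_nonpos (by linarith)]
          ring
      _ ≤ ‖x - y‖ := abs_coord_le _ _
  exact hdist.trans (dist_le_diam_of_mem (cube_compact k ρ z).isBounded hx hy)

lemma cube_overlap (hd : 2 ≤ d) (k : Fin d) {ρ : ℝ} (hρ : 0 < ρ) {z z' : Fin d → ℤ}
    (hzk : z k = 0) (hz'k : z' k = 0) (hzz : z ≠ z') :
    μH[(d:ℝ)-1] (cube k ρ z ∩ cube k ρ z') = 0 := by
  -- find coordinate where they differ
  have : ∃ i₀, i₀ ≠ k ∧ z i₀ ≠ z' i₀ := by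
    by_contra hc
    push_neg at hc
    apply hzz
    funext i
    by_cases h : i = k
    · subst h; rw [hzk, hz'k]
    · exact hc i h
  obtain ⟨i₀, hi₀k, hi₀⟩ := this
  set S := cube k ρ z ∩ cube k ρ z' with hS
  -- every point of S has i₀ coordinate equal to ρ * max
  have hSsub : Fmap k '' S ⊆ {u : {i : Fin d // i ≠ k} → ℝ |
      u ⟨i₀, hi₀k⟩ = ρ * (max (z i₀) (z' i₀) : ℤ)} := by
    rintro _ ⟨x, hx, rfl⟩
    have h1 := hx.1.2 i₀ hi₀k
    have h2 := hx.2.2 i₀ hi₀k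
    simp only [Set.mem_Icc] at h1 h2
    have hmax : x i₀ = ρ * ((max (z i₀) (z' i₀) : ℤ) : ℝ) := by
      rcases lt_or_gt_of_ne hi₀ with h | h
      · have hle : (z i₀ : ℝ) + 1 ≤ (z' i₀ : ℝ) := by exact_mod_cast h
        have hmx : (max (z i₀) (z' i₀)) = z' i₀ := max_eq_right h.le
        rw [hmx]
        nlinarith
      · have hle : (z' i₀ : ℝ) + 1 ≤ (z i₀ : ℝ) := by exact_mod_cast h
        have hmx : (max (z i₀) (z' i₀)) = z i₀ := max_eq_left h.le
        rw [hmx]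
        nlinarith
    simpa [Fmap] using hmax
  -- the hyperplane in the pi space has measure zero
  have hhyp : μH[(d:ℝ)-1] {u : {i : Fin d // i ≠ k} → ℝ |
      u ⟨i₀, hi₀k⟩ = ρ * (max (z i₀) (z' i₀) : ℤ)} = 0 := by
    have h1 : (d:ℝ) - 1 = ((Fintype.card {i : Fin d // i ≠ k} : ℕ) : ℝ) := by
      rw [card_ne hd k, cast_pred hd]
    rw [h1, hausdorffMeasure_pi_real]
    have h2 : {u : {i : Fin d // i ≠ k} → ℝ | u ⟨i₀, hi₀k⟩ = ρ * (max (z i₀) (z' i₀) : ℤ)}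
        = Set.pi Set.univ (fun j => if j = ⟨i₀, hi₀k⟩ then {ρ * (max (z i₀) (z' i₀) : ℤ)} else (Set.univ : Set ℝ)) := by
      ext u
      simp only [Set.mem_setOf_eq, Set.mem_pi, Set.mem_univ, true_implies]
      constructor
      · intro h j
        by_cases hj : j = ⟨i₀, hi₀k⟩ <;> simp [hj, h]
      · intro h
        have := h ⟨i₀, hi₀k⟩
        simpa using this
    rw [h2, volume_pi_pi]
    refine Finset.prod_eq_zero (Finset.mem_univ ⟨i₀, hi₀k⟩) ?_
    simp
  -- now S = Gmap '' (Fmap '' S), use lipschitz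
  have hS0 : S = Gmap k '' (Fmap k '' S) := by
    rw [Set.image_image]
    ext x
    constructor
    · intro hx
      exact ⟨x, hx, Gmap_Fmap hx.1.1⟩
    · rintro ⟨w, hw, rfl⟩
      show Gmap k (Fmap k w) ∈ S
      rwa [Gmap_Fmap hw.1.1]
  have := (lipschitz_Gmap k).hausdorffMeasure_image_le (exp_nonneg hd) (Fmap k '' S)
  rw [← hS0] at this
  refine le_antisymm (this.trans ?_) (zero_le)
  have hle := measure_mono (μ := μH[(d:ℝ)-1]) hSsub
  rw [hhyp] at hle
  rw [le_zero_iff.1 hle, mul_zero]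


noncomputable section Face

/-- projection setting coordinate k to 0 -/
def pk (k : Fin d) (x : EuclideanSpace ℝ (Fin d)) : EuclideanSpace ℝ (Fin d) :=
  WithLp.toLp 2 (Function.update x k 0)

lemma pk_apply (k : Fin d) (x : EuclideanSpace ℝ (Fin d)) (i : Fin d) :
    pk k x i = if i = k then 0 else x i := Function.update_apply x k 0 i

lemma pk_sub (k : Fin d) (x y : EuclideanSpace ℝ (Fin d)) :
    pk k x - pk k y = pk k (x - y) := by
  ext i
  by_cases h : i = k <;> simp [pk_apply, h]

lemma pk_norm_le (k : Fin d) (x : EuclideanSpace ℝ (Fin d)) : ‖pk k x‖ ≤ ‖x‖ := by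
  refine norm_le_norm_of_coords fun i => ?_
  by_cases h : i = k <;> simp [pk_apply, h, abs_nonneg]

lemma pk_lipschitz (k : Fin d) : LipschitzWith 1 (pk (d := d) k) := by
  refine LipschitzWith.of_dist_le_mul fun x y => ?_
  rw [NNReal.coe_one, one_mul, dist_eq_norm, dist_eq_norm, pk_sub]
  exact pk_norm_le k _

lemma inner_update (ν₀ y : EuclideanSpace ℝ (Fin d)) (k : Fin d) (t : ℝ) :
    ⟪ν₀, (WithLp.toLp 2 (Function.update y k t) : EuclideanSpace ℝ (Fin d))⟫
      = ⟪ν₀, pk k y⟫ + ν₀ k * t := by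
  simp only [PiLp.inner_apply, RCLike.inner_apply, conj_trivial]
  have h : ∀ s : ℝ, (∑ i, ν₀ i * (WithLp.toLp 2 (Function.update y k s) : EuclideanSpace ℝ (Fin d)) i)
      = ν₀ k * s + ∑ i ∈ Finset.univ.erase k, ν₀ i * y i := by
    intro s
    rw [← Finset.add_sum_erase _ (fun i => ν₀ i * (WithLp.toLp 2 (Function.update y k s) : EuclideanSpace ℝ (Fin d)) i) (Finset.mem_univ k)]
    congr 1
    · simp
    · refine Finset.sum_congr rfl fun i hi => ?_
      have : (WithLp.toLp 2 (Function.update y k s) : EuclideanSpace ℝ (Fin d)) i = y i := by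
        rw [WithLp.ofLp_toLp, Function.update_apply]
        simp [Finset.ne_of_mem_erase hi]
      rw [this]
  have h2 : (∑ i, ν₀ i * pk k y i) = ν₀ k * 0 + ∑ i ∈ Finset.univ.erase k, ν₀ i * y i := h 0
  simp only [WithLp.ofLp_toLp] at h
  simp only [mul_comm (ν₀.ofLp _)] at h h2
  rw [h t, h2]
  ring

/-- the lift back to the hyperplane ⟪ν₀,·⟫ = a -/
def lift (ν₀ : EuclideanSpace ℝ (Fin d)) (k : Fin d) (a : ℝ)
    (y : EuclideanSpace ℝ (Fin d)) : EuclideanSpace ℝ (Fin d) :=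
  WithLp.toLp 2 (Function.update y k ((a - ⟪ν₀, pk k y⟫) / ν₀ k))

lemma inner_lift {ν₀ : EuclideanSpace ℝ (Fin d)} {k : Fin d} (hk : ν₀ k ≠ 0) (a : ℝ)
    (y : EuclideanSpace ℝ (Fin d)) : ⟪ν₀, lift ν₀ k a y⟫ = a := by
  rw [lift, inner_update]
  field_simp
  ring

lemma pk_lift (ν₀ : EuclideanSpace ℝ (Fin d)) (k : Fin d) (a : ℝ)
    (y : EuclideanSpace ℝ (Fin d)) : pk k (lift ν₀ k a y) = pk k y := by
  simp [pk, lift, Function.update_idem]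

lemma lift_pk {ν₀ : EuclideanSpace ℝ (Fin d)} {k : Fin d} (hk : ν₀ k ≠ 0) {a : ℝ}
    {x : EuclideanSpace ℝ (Fin d)} (hx : ⟪ν₀, x⟫ = a) : lift ν₀ k a (pk k x) = x := by
  have h1 : ⟪ν₀, x⟫ = ⟪ν₀, pk k x⟫ + ν₀ k * x k := by
    have := inner_update ν₀ x k (x k)
    rwa [Function.update_eq_self, WithLp.toLp_ofLp] at this
  have h2 : pk k (pk k x) = pk k x := by
    simp [pk, Function.update_idem]
  rw [lift, h2]
  have h3 : (a - ⟪ν₀, pk k x⟫) / ν₀ k = x k := by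
    rw [← hx, h1]
    field_simp
    ring
  rw [h3]
  ext i
  by_cases h : i = k
  · subst h; simp
  · simp [pk_apply, h, Function.update_apply]

lemma pk_eq_self {k : Fin d} {q : EuclideanSpace ℝ (Fin d)} (h : q k = 0) : pk k q = q := by
  ext i
  by_cases hik : i = k
  · subst hik; simp [pk_apply, h]
  · simp [pk_apply, hik]

lemma lift_sub (ν₀ : EuclideanSpace ℝ (Fin d)) (k : Fin d) (a : ℝ)
    (y y' : EuclideanSpace ℝ (Fin d)) :
    lift ν₀ k a y - lift ν₀ k a y'
      = pk k (y - y') + ((a - ⟪ν₀, pk k y⟫) / ν₀ k - (a - ⟪ν₀, pk k y'⟫) / ν₀ k) •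
          EuclideanSpace.single k (1:ℝ) := by
  ext i
  by_cases h : i = k
  · subst h
    simp [lift, pk_apply, EuclideanSpace.single_apply, Function.update_apply]
  · simp [lift, pk_apply, EuclideanSpace.single_apply, Function.update_apply, h]

lemma lift_lipschitz {ν₀ : EuclideanSpace ℝ (Fin d)} {k : Fin d} (hk : ν₀ k ≠ 0)
    (hν : ‖ν₀‖ = 1) (a : ℝ) (y y' : EuclideanSpace ℝ (Fin d)) :
    ‖lift ν₀ k a y - lift ν₀ k a y'‖ ≤ (1 + 1/|ν₀ k|) * ‖y - y'‖ := by
  rw [lift_sub]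
  refine (norm_add_le _ _).trans ?_
  rw [norm_smul, EuclideanSpace.norm_single, norm_one, mul_one, Real.norm_eq_abs]
  have h1 : ‖pk k (y - y')‖ ≤ ‖y - y'‖ := pk_norm_le k _
  have h2 : |(a - ⟪ν₀, pk k y⟫) / ν₀ k - (a - ⟪ν₀, pk k y'⟫) / ν₀ k|
      ≤ ‖y - y'‖ / |ν₀ k| := by
    have he : (a - ⟪ν₀, pk k y⟫) / ν₀ k - (a - ⟪ν₀, pk k y'⟫) / ν₀ k
        = ⟪ν₀, pk k y' - pk k y⟫ / ν₀ k := by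
      rw [inner_sub_right]
      field_simp
      ring
    rw [he, abs_div]
    have hcs : |⟪ν₀, pk k y' - pk k y⟫| ≤ ‖y - y'‖ := by
      refine (abs_real_inner_le_norm _ _).trans ?_
      rw [hν, one_mul, pk_sub]
      have : pk k (y' - y) = -(pk k (y - y')) := by
        rw [← pk_sub, ← pk_sub]
        congr 1
        abel
      rw [this, norm_neg]
      exact pk_norm_le k _
    gcongr
  have hpos : 0 < |ν₀ k| := abs_pos.2 hk
  have hnn : 0 ≤ ‖y - y'‖ := norm_nonneg _
  calc ‖pk k (y - y')‖ + |(a - ⟪ν₀, pk k y⟫) / ν₀ k - (a - ⟪ν₀, pk k y'⟫) / ν₀ k|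
      ≤ ‖y - y'‖ + ‖y - y'‖ / |ν₀ k| := add_le_add h1 h2
    _ = (1 + 1/|ν₀ k|) * ‖y - y'‖ := by field_simp

end Face
end S7

set_option maxHeartbeats 2000000 in
open S7 in
/-- Lattice partition of a face Π of a bounded convex polygon D: for every small ρ > 0
there are measurable sets Γ₁,...,Γ_M ⊆ Π with pairwise H^{d−1}-null overlaps and a
measurable set E ⊆ Π contained in a c₀ρ-strip of the relative boundary of Π, such that
Π \ E = ⋃ Γ_j, each projection π_k(Γ_j) is a (d−1)-dimensional lattice cube of side ρ,
H^{d−1}(Γ_j) ≈ ρ^{d−1} and diam(Γ_j) ≈ ρ. -/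
theorem stmt7 (d N : ℕ) (hd : 2 ≤ d)
    (ν : Fin N → EuclideanSpace ℝ (Fin d)) (c : Fin N → ℝ) (hν : ∀ j, ‖ν j‖ = 1)
    (D : Set (EuclideanSpace ℝ (Fin d)))
    (hD : D = ⋂ j, {x | c j < ⟪ν j, x⟫})
    (hDb : IsBounded D) (hDne : D.Nonempty)
    (k₀ : Fin N) (Pi' : Set (EuclideanSpace ℝ (Fin d)))
    (hPi : Pi' = {x | ⟪ν k₀, x⟫ = c k₀} ∩ ⋂ j ∈ {j | j ≠ k₀}, {x | c j < ⟪ν j, x⟫})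
    (k : Fin d) (hνk : ν k₀ k ≠ 0) :
    ∃ ρ₀ > 0, ∃ c₀ > 0, ∃ c₁ > 0, ∃ c₂ > 0, ∀ ρ : ℝ, 0 < ρ → ρ < ρ₀ →
      ∃ (M : ℕ) (Γ : Fin M → Set (EuclideanSpace ℝ (Fin d)))
        (E : Set (EuclideanSpace ℝ (Fin d))),
        (∀ j, MeasurableSet (Γ j)) ∧ MeasurableSet E ∧
        E ⊆ Pi' ∧ (∀ j, Γ j ⊆ Pi') ∧
        (∀ i j, i ≠ j → μH[(d:ℝ) - 1] (Γ i ∩ Γ j) = 0) ∧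
        E ⊆ {y ∈ Pi' | infDist y (closure Pi' \ Pi') ≤ c₀ * ρ} ∧
        Pi' \ E = ⋃ j, Γ j ∧
        (∀ j, ∃ z : Fin d → ℤ,
          (fun x : EuclideanSpace ℝ (Fin d) =>
              (WithLp.toLp 2 (Function.update x k 0) : EuclideanSpace ℝ (Fin d))) '' Γ j
            = {x : EuclideanSpace ℝ (Fin d) | x k = 0 ∧
                ∀ i, i ≠ k → x i ∈ Set.Icc (ρ * z i) (ρ * z i + ρ)}) ∧
        (∀ j, ENNReal.ofReal (c₁ * ρ ^ (d - 1)) ≤ μH[(d:ℝ) - 1] (Γ j) ∧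
              μH[(d:ℝ) - 1] (Γ j) ≤ ENNReal.ofReal (c₂ * ρ ^ (d - 1))) ∧
        (∀ j, c₁ * ρ ≤ Metric.diam (Γ j) ∧ Metric.diam (Γ j) ≤ c₂ * ρ) := by
  classical
  set ν₀ : EuclideanSpace ℝ (Fin d) := ν k₀ with hν₀def
  set a : ℝ := c k₀ with hadef
  have hν₀ : ‖ν₀‖ = 1 := hν k₀
  obtain ⟨K, hKdef⟩ : ∃ K : ℝ, K = 1 + 1/|ν₀ k| := ⟨_, rfl⟩
  have habs : 0 < |ν₀ k| := abs_pos.2 hνk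
  have hK1 : 1 ≤ K := by
    rw [hKdef]
    have : 0 < 1/|ν₀ k| := by positivity
    linarith
  have hK0 : 0 < K := lt_of_lt_of_le one_pos hK1
  have hKd1 : 1 ≤ K * d := by
    have hd1 : (1:ℝ) ≤ d := by exact_mod_cast (by omega : 1 ≤ d)
    nlinarith
  -- the lift map is Lipschitz
  have hLlip : LipschitzWith (Real.toNNReal K) (lift ν₀ k a) := by
    refine LipschitzWith.of_dist_le_mul fun y y' => ?_
    rw [dist_eq_norm, dist_eq_norm, Real.coe_toNNReal _ hK0.le, hKdef]
    exact lift_lipschitz hνk hν₀ a y y'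
  -- membership in Pi'
  have hPimem : ∀ x ∈ Pi', ⟪ν₀, x⟫ = a ∧ ∀ j, j ≠ k₀ → c j < ⟪ν j, x⟫ := by
    intro x hx
    rw [hPi] at hx
    refine ⟨hx.1, fun j hj => ?_⟩
    have := hx.2
    simp only [Set.mem_iInter] at this
    exact this j hj
  have hPimem' : ∀ x : EuclideanSpace ℝ (Fin d), ⟪ν₀, x⟫ = a →
      (∀ j, j ≠ k₀ → c j < ⟪ν j, x⟫) → x ∈ Pi' := by
    intro x h1 h2
    rw [hPi]
    exact ⟨h1, by simp only [Set.mem_iInter]; exact fun j hj => h2 j hj⟩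
  -- bound on D and Pi'
  obtain ⟨R, hR⟩ := hDb.subset_closedBall 0
  obtain ⟨p, hp⟩ := hDne
  have hpD : ∀ j, c j < ⟪ν j, p⟫ := by
    rw [hD] at hp
    simp only [Set.mem_iInter, Set.mem_setOf_eq] at hp
    exact hp
  have hR0 : 0 ≤ R := by
    have := hR hp
    rw [Metric.mem_closedBall, dist_zero_right] at this
    exact le_trans (norm_nonneg _) this
  have hPibound : ∀ x ∈ Pi', ‖x‖ ≤ 3 * R := by
    intro x hx
    obtain ⟨hx1, hx2⟩ := hPimem x hx
    have hm : (2:ℝ)⁻¹ • (x + p) ∈ D := by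
      rw [hD]
      simp only [Set.mem_iInter, Set.mem_setOf_eq]
      intro j
      rw [inner_smul_right, inner_add_right]
      by_cases hj : j = k₀
      · rw [hj]
        have h2 : c k₀ < ⟪ν k₀, p⟫ := hpD k₀
        have h1 : ⟪ν k₀, x⟫ = c k₀ := hx1
        rw [h1]
        linarith
      · have h1 := hx2 j hj
        have h2 := hpD j
        linarith
    have hmb : ‖(2:ℝ)⁻¹ • (x + p)‖ ≤ R := by
      have := hR hm
      rwa [Metric.mem_closedBall, dist_zero_right] at this
    have hpb : ‖p‖ ≤ R := by
      have := hR hp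
      rwa [Metric.mem_closedBall, dist_zero_right] at this
    have hxe : x = (2:ℝ) • ((2:ℝ)⁻¹ • (x + p)) - p := by
      rw [smul_smul]
      norm_num
    calc ‖x‖ = ‖(2:ℝ) • ((2:ℝ)⁻¹ • (x + p)) - p‖ := by rw [← hxe]
      _ ≤ ‖(2:ℝ) • ((2:ℝ)⁻¹ • (x + p))‖ + ‖p‖ := norm_sub_le _ _
      _ ≤ 2 * R + R := by
          refine add_le_add ?_ hpb
          rw [norm_smul]
          simp only [Real.norm_ofNat]
          nlinarith [norm_nonneg ((2:ℝ)⁻¹ • (x + p))]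
      _ = 3 * R := by ring
  refine ⟨1, one_pos, K * d + 1, by nlinarith, 1, one_pos, (K * d)^d,
    pow_pos (by linarith : (0:ℝ) < K * d) d, fun ρ hρ hρ1 => ?_⟩
  -- the projection of the face
  set U : Set (EuclideanSpace ℝ (Fin d)) := pk k '' Pi' with hUdef
  have hliftU : ∀ q ∈ U, lift ν₀ k a q ∈ Pi' := by
    rintro q ⟨x, hx, rfl⟩
    have h1 : ⟪ν₀, x⟫ = a := (hPimem x hx).1
    rw [lift_pk hνk h1]
    exact hx
  have hpk_mem_U : ∀ x ∈ Pi', pk k x ∈ U := fun x hx => ⟨x, hx, rfl⟩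
  -- admissible lattice points
  set Z : Set (Fin d → ℤ) := {z | z k = 0 ∧ cube k ρ z ⊆ U} with hZdef
  have hZfin : Z.Finite := by
    set B : ℤ := ⌈3 * R / ρ⌉ with hBdef
    have hB0 : 0 ≤ B := Int.ceil_nonneg (by positivity)
    refine Set.Finite.subset (Set.Finite.pi fun i : Fin d => Set.finite_Icc (-B) B) ?_
    rintro z ⟨hzk, hzsub⟩
    have hcor : Gmap k (fun i : {i : Fin d // i ≠ k} => ρ * z i.1) ∈ U :=
      hzsub (corner_mem_cube k hρ z)
    have hnorm : ‖Gmap k (fun i : {i : Fin d // i ≠ k} => ρ * z i.1)‖ ≤ 3 * R := by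
      obtain ⟨x, hx, hxe⟩ := hcor
      rw [← hxe]
      exact le_trans (pk_norm_le k x) (hPibound x hx)
    simp only [Set.mem_pi, Set.mem_univ, true_implies, Set.mem_Icc, ← abs_le]
    intro i
    by_cases h : i = k
    · subst h; rw [hzk]; simpa using hB0
    · have h1 : |ρ * (z i : ℝ)| ≤ 3 * R := by
        have h2 := abs_coord_le (Gmap k (fun i : {i : Fin d // i ≠ k} => ρ * z i.1)) i
        rw [Gmap_apply_ne k _ h] at h2
        exact h2.trans hnorm
      have h2 : |(z i : ℝ)| ≤ 3 * R / ρ := by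
        rw [abs_mul, abs_of_pos hρ] at h1
        rw [le_div_iff₀ hρ]
        nlinarith
      have h3 : (|z i| : ℝ) ≤ (B : ℝ) := by
        push_cast
        exact h2.trans (Int.le_ceil _)
      exact_mod_cast h3
  set Zf := hZfin.toFinset with hZfdef
  set zf : Fin Zf.card → (Fin d → ℤ) := fun j => (Zf.equivFin.symm j : Fin d → ℤ) with hzfdef
  have hzfZ : ∀ j, zf j ∈ Z := fun j => hZfin.mem_toFinset.1 (Zf.equivFin.symm j).2
  have hzfinj : Function.Injective zf := fun i j h =>
    Zf.equivFin.symm.injective (Subtype.ext h)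
  set Γ : Fin Zf.card → Set (EuclideanSpace ℝ (Fin d)) :=
    fun j => lift ν₀ k a '' cube k ρ (zf j) with hΓdef
  set E : Set (EuclideanSpace ℝ (Fin d)) := Pi' \ ⋃ j, Γ j with hEdef
  have hΓcomp : ∀ j, IsCompact (Γ j) :=
    fun j => (cube_compact k ρ (zf j)).image hLlip.continuous
  have hΓPi : ∀ j, Γ j ⊆ Pi' := by
    rintro j _ ⟨q, hq, rfl⟩
    exact hliftU q ((hzfZ j).2 hq)
  have hpkΓ : ∀ j, pk k '' Γ j = cube k ρ (zf j) := by
    intro j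
    show pk k '' (lift ν₀ k a '' cube k ρ (zf j)) = cube k ρ (zf j)
    rw [Set.image_image]
    have h1 : ∀ q ∈ cube k ρ (zf j), pk k (lift ν₀ k a q) = q := by
      intro q hq
      rw [pk_lift, pk_eq_self hq.1]
    calc (fun q => pk k (lift ν₀ k a q)) '' cube k ρ (zf j)
        = (fun q => q) '' cube k ρ (zf j) := Set.image_congr h1
      _ = cube k ρ (zf j) := Set.image_id _
  have hΓcap : ∀ i j, Γ i ∩ Γ j ⊆ lift ν₀ k a '' (cube k ρ (zf i) ∩ cube k ρ (zf j)) := by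
    rintro i j x ⟨⟨q, hq, rfl⟩, ⟨q', hq', he⟩⟩
    have hqq : q' = q := by
      have h1 : pk k (lift ν₀ k a q') = pk k (lift ν₀ k a q) := by rw [he]
      rwa [pk_lift, pk_lift, pk_eq_self hq'.1, pk_eq_self hq.1] at h1
    exact ⟨q, ⟨hq, hqq ▸ hq'⟩, rfl⟩
  -- measure bounds
  have hμup : ∀ j, μH[(d:ℝ)-1] (Γ j) ≤ ENNReal.ofReal ((K*d)^d * ρ^(d-1)) := by
    intro j
    refine (hLlip.hausdorffMeasure_image_le (exp_nonneg hd) _).trans ?_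
    have h1 := hausdorff_cube_le hd k hρ (zf j)
    have h2 : ((Real.toNNReal K : ℝ≥0∞)) ^ ((d:ℝ)-1) = ENNReal.ofReal (K^(d-1)) := by
      rw [← cast_pred hd, ENNReal.rpow_natCast, ENNReal.ofReal_pow hK0.le]
      rfl
    calc ((Real.toNNReal K : ℝ≥0∞)) ^ ((d:ℝ)-1) * μH[(d:ℝ)-1] (cube k ρ (zf j))
        ≤ ENNReal.ofReal (K^(d-1)) * ENNReal.ofReal ((d:ℝ)^(d-1) * ρ^(d-1)) := by
          rw [h2]; exact mul_le_mul_right h1 _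
      _ = ENNReal.ofReal (K^(d-1) * ((d:ℝ)^(d-1) * ρ^(d-1))) :=
          (ENNReal.ofReal_mul (by positivity)).symm
      _ ≤ ENNReal.ofReal ((K*d)^d * ρ^(d-1)) := by
          refine ENNReal.ofReal_le_ofReal ?_
          have he : K^(d-1) * ((d:ℝ)^(d-1) * ρ^(d-1)) = (K*d)^(d-1) * ρ^(d-1) := by
            rw [mul_pow]; ring
          rw [he]
          have h3 : (K*d)^(d-1) ≤ (K*d)^d := pow_le_pow_right₀ hKd1 (by omega)
          have h4 : (0:ℝ) ≤ ρ^(d-1) := by positivity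
          nlinarith
  have hμlo : ∀ j, ENNReal.ofReal (ρ^(d-1)) ≤ μH[(d:ℝ)-1] (Γ j) := by
    intro j
    have h0 := hausdorff_cube_ge hd k hρ (zf j)
    have h2 := (pk_lipschitz k).hausdorffMeasure_image_le (exp_nonneg hd) (Γ j)
    rw [hpkΓ j] at h2
    simp only [ENNReal.coe_one, ENNReal.one_rpow, one_mul] at h2
    exact h0.trans h2
  -- diameter bounds
  have hdiamup : ∀ j, diam (Γ j) ≤ (K*d)^d * ρ := by
    intro j
    have hnn : (0:ℝ) ≤ (K*d)^d * ρ := by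
      have := pow_pos (lt_of_lt_of_le one_pos hKd1) d
      nlinarith
    refine diam_le_of_forall_dist_le hnn ?_
    rintro x ⟨q, hq, rfl⟩ y ⟨q', hq', rfl⟩
    have h1 : dist (lift ν₀ k a q) (lift ν₀ k a q') ≤ K * dist q q' := by
      rw [dist_eq_norm, dist_eq_norm, hKdef]
      exact lift_lipschitz hνk hν₀ a q q'
    have h2 : dist q q' ≤ d * ρ := cube_dist_le k hρ (zf j) hq hq'
    have h3 : K * d ≤ (K*d)^d := le_self_pow₀ hKd1 (by omega)
    calc dist (lift ν₀ k a q) (lift ν₀ k a q') ≤ K * (d * ρ) := by nlinarith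
      _ = (K * d) * ρ := by ring
      _ ≤ (K*d)^d * ρ := mul_le_mul_of_nonneg_right h3 hρ.le
  have hdiamlo : ∀ j, ρ ≤ diam (Γ j) := by
    intro j
    have h1 : diam (cube k ρ (zf j)) ≤ diam (Γ j) := by
      rw [← hpkΓ j]
      refine diam_le_of_forall_dist_le diam_nonneg ?_
      rintro x ⟨u, hu, rfl⟩ y ⟨v, hv, rfl⟩
      have hle : dist (pk k u) (pk k v) ≤ dist u v := by
        have := (pk_lipschitz k).dist_le_mul u v
        simpa using this
      exact hle.trans (dist_le_diam_of_mem (hΓcomp j).isBounded hu hv)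
    exact (cube_diam_ge hd k hρ (zf j)).trans h1
  -- overlap
  have hdisj : ∀ i j, i ≠ j → μH[(d:ℝ)-1] (Γ i ∩ Γ j) = 0 := by
    intro i j hij
    have hz : zf i ≠ zf j := fun h => hij (hzfinj h)
    have h0 := cube_overlap hd k hρ (hzfZ i).1 (hzfZ j).1 hz
    have h1 := measure_mono (μ := μH[(d:ℝ)-1]) (hΓcap i j)
    have h2 := hLlip.hausdorffMeasure_image_le (exp_nonneg hd)
      (cube k ρ (zf i) ∩ cube k ρ (zf j))
    rw [h0, mul_zero] at h2
    exact le_antisymm (h1.trans h2) (zero_le)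
  -- measurability
  have hPim : MeasurableSet Pi' := by
    rw [hPi]
    refine MeasurableSet.inter ?_ ?_
    · exact (isClosed_eq (Continuous.inner continuous_const continuous_id)
        continuous_const).measurableSet
    · refine MeasurableSet.biInter (Set.to_countable _) fun j _ => ?_
      exact (isOpen_lt continuous_const
        (Continuous.inner continuous_const continuous_id)).measurableSet
  -- strip
  have hstrip : E ⊆ {y ∈ Pi' | infDist y (closure Pi' \ Pi') ≤ (K * d + 1) * ρ} := by
    rintro y ⟨hyPi, hyn⟩
    refine ⟨hyPi, ?_⟩
    obtain ⟨hy1, hy2⟩ := hPimem y hyPi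
    set z : Fin d → ℤ := fun i => if i = k then 0 else ⌊y i / ρ⌋ with hzdef
    have hzk : z k = 0 := by simp [hzdef]
    have hmemQ : pk k y ∈ cube k ρ z := by
      refine ⟨by simp [pk_apply], fun i hi => ?_⟩
      have hpky : pk k y i = y i := by simp [pk_apply, hi]
      have hzz : (z i : ℝ) = (⌊y i / ρ⌋ : ℝ) := by simp [hzdef, hi]
      rw [hpky, Set.mem_Icc, hzz]
      constructor
      · calc ρ * (⌊y i / ρ⌋ : ℝ) ≤ ρ * (y i / ρ) :=
            mul_le_mul_of_nonneg_left (Int.floor_le _) hρ.le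
          _ = y i := by field_simp
      · have hf := Int.lt_floor_add_one (y i / ρ)
        calc y i = ρ * (y i / ρ) := by field_simp
          _ ≤ ρ * ((⌊y i / ρ⌋ : ℝ) + 1) := mul_le_mul_of_nonneg_left hf.le hρ.le
          _ = ρ * (⌊y i / ρ⌋ : ℝ) + ρ := by ring
    have hznot : z ∉ Z := by
      intro hzZ
      apply hyn
      have hzmem : z ∈ Zf := hZfin.mem_toFinset.2 hzZ
      refine Set.mem_iUnion.2 ⟨Zf.equivFin ⟨z, hzmem⟩, ?_⟩
      have hzfj : zf (Zf.equivFin ⟨z, hzmem⟩) = z := by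
        show ((Zf.equivFin.symm (Zf.equivFin ⟨z, hzmem⟩)) : Fin d → ℤ) = z
        rw [Equiv.symm_apply_apply]
      show y ∈ lift ν₀ k a '' cube k ρ (zf (Zf.equivFin ⟨z, hzmem⟩))
      rw [hzfj]
      exact ⟨pk k y, hmemQ, lift_pk hνk hy1⟩
    have hnots : ¬ (cube k ρ z ⊆ U) := fun h => hznot ⟨hzk, h⟩
    obtain ⟨q, hq, hqU⟩ := Set.not_subset.1 hnots
    have hLq : lift ν₀ k a q ∉ Pi' := by
      intro hc
      apply hqU
      have hpq : pk k (lift ν₀ k a q) = q := by rw [pk_lift, pk_eq_self hq.1]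
      exact hpq ▸ hpk_mem_U _ hc
    have hdistq : dist y (lift ν₀ k a q) ≤ K * (d * ρ) := by
      have h1 : dist (pk k y) q ≤ d * ρ := cube_dist_le k hρ z hmemQ hq
      have h2 : dist (lift ν₀ k a (pk k y)) (lift ν₀ k a q) ≤ K * dist (pk k y) q := by
        rw [dist_eq_norm, dist_eq_norm, hKdef]
        exact lift_lipschitz hνk hν₀ a _ _
      rw [lift_pk hνk hy1] at h2
      have h3 : (0:ℝ) ≤ dist (pk k y) q := dist_nonneg
      nlinarith
    have hfinal : ∃ w ∈ closure Pi' \ Pi', dist y w ≤ K * (d * ρ) := by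
      by_cases hcl : lift ν₀ k a q ∈ closure Pi'
      · exact ⟨lift ν₀ k a q, ⟨hcl, hLq⟩, hdistq⟩
      · have hscon : IsPreconnected (segment ℝ y (lift ν₀ k a q)) :=
          (convex_segment _ _).isPreconnected
        have hOopen : IsOpen (⋂ j ∈ {j | j ≠ k₀}, {x : EuclideanSpace ℝ (Fin d) | c j < ⟪ν j, x⟫}) := by
          refine Set.Finite.isOpen_biInter (Set.toFinite _) fun j _ => ?_
          exact isOpen_lt continuous_const (Continuous.inner continuous_const continuous_id)
        have hyO : y ∈ ⋂ j ∈ {j | j ≠ k₀}, {x : EuclideanSpace ℝ (Fin d) | c j < ⟪ν j, x⟫} := by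
          rw [hPi] at hyPi
          exact hyPi.2
        have hsH : ∀ w ∈ segment ℝ y (lift ν₀ k a q), ⟪ν₀, w⟫ = a := by
          rintro w ⟨t1, t2, ht1, ht2, hts, rfl⟩
          rw [inner_add_right, inner_smul_right, inner_smul_right, hy1, inner_lift hνk]
          linear_combination a * hts
        have hkey : ∃ w ∈ segment ℝ y (lift ν₀ k a q), w ∈ closure Pi' \ Pi' := by
          by_contra hno
          push_neg at hno
          have hcover : segment ℝ y (lift ν₀ k a q) ⊆
              (⋂ j ∈ {j | j ≠ k₀}, {x : EuclideanSpace ℝ (Fin d) | c j < ⟪ν j, x⟫}) ∪ (closure Pi')ᶜ := by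
            intro w hw
            by_cases hwPi : w ∈ Pi'
            · left
              rw [hPi] at hwPi
              exact hwPi.2
            · right
              intro hwc
              exact (hno w hw) ⟨hwc, hwPi⟩
          obtain ⟨w, hws, hwO, hwcl⟩ := hscon _ _ hOopen
            (isOpen_compl_iff.2 isClosed_closure) hcover
            ⟨y, left_mem_segment _ _ _, hyO⟩
            ⟨lift ν₀ k a q, right_mem_segment _ _ _, hcl⟩
          have hwPi : w ∈ Pi' := by
            rw [hPi]
            exact ⟨hsH w hws, hwO⟩
          exact hwcl (subset_closure hwPi)
        obtain ⟨w, hws, hw⟩ := hkey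
        refine ⟨w, hw, ?_⟩
        obtain ⟨t1, t2, ht1, ht2, hts, rfl⟩ := hws
        have hw' : t1 • y + t2 • lift ν₀ k a q = y + t2 • (lift ν₀ k a q - y) := by
          rw [smul_sub, show t1 = 1 - t2 from by linarith, sub_smul, one_smul]
          abel
        rw [hw', dist_self_add_right, norm_smul, Real.norm_eq_abs, abs_of_nonneg ht2]
        have h5 : ‖lift ν₀ k a q - y‖ = dist y (lift ν₀ k a q) := by
          rw [dist_eq_norm, norm_sub_rev]
        have h6 : t2 ≤ 1 := by linarith
        have h7 : (0:ℝ) ≤ ‖lift ν₀ k a q - y‖ := norm_nonneg _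
        nlinarith [hdistq]
    obtain ⟨w, hw, hdw⟩ := hfinal
    refine le_trans (infDist_le_dist_of_mem hw) (hdw.trans ?_)
    nlinarith
  -- assemble
  have hPiE : Pi' \ E = ⋃ j, Γ j := by
    rw [hEdef]
    exact Set.diff_diff_cancel_left (Set.iUnion_subset hΓPi)
  refine ⟨Zf.card, Γ, E, fun j => (hΓcomp j).measurableSet,
    hPim.diff (MeasurableSet.iUnion fun j => (hΓcomp j).measurableSet),
    Set.diff_subset, hΓPi, hdisj, hstrip, hPiE,
    fun j => ⟨zf j, hpkΓ j⟩,
    fun j => ⟨by rw [one_mul]; exact hμlo j, hμup j⟩,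
    fun j => ⟨by rw [one_mul]; exact hdiamlo j, hdiamup j⟩⟩
end

section
/- Let D ⊂ ℝ^d be a bounded convex polygonal domain whose face normals are all Diophantine, and let Π be a face of D with Diophantine normal ν. Then for every nonzero m ∈ ℤ^d, the oscillatory integral J_λ = ∫_Π e^{2πi λ m·y} dσ(y) tends to 0 as λ → ∞. -/
open MeasureTheory Metric Bornology Filter Module
open scoped RealInnerProductSpace

lemma aux_RL {n : ℕ} (w₀ : EuclideanSpace ℝ (Fin n)) (hw : w₀ ≠ 0) (b : ℝ)
    (S : Set (EuclideanSpace ℝ (Fin n))) (hS : MeasurableSet S) :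
    Tendsto (fun lam : ℝ => ∫ x in S,
      Complex.exp (2 * Real.pi * Complex.I * lam * ((b + ⟪w₀, x⟫ : ℝ) : ℂ)) ∂volume)
      atTop (nhds 0) := by
  have key : Tendsto (fun lam : ℝ => ∫ x in S,
      Complex.exp (2 * Real.pi * Complex.I * lam * ((⟪w₀, x⟫ : ℝ) : ℂ)) ∂volume)
      atTop (nhds 0) := by
    have h1 := tendsto_integral_exp_inner_smul_cocompact
      (V := EuclideanSpace ℝ (Fin n)) (f := S.indicator (fun _ => (1:ℂ)))
    have h2 : Tendsto (fun lam : ℝ => -(lam • w₀)) atTop (cocompact (EuclideanSpace ℝ (Fin n))) := by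
      rw [← cobounded_eq_cocompact, ← tendsto_norm_atTop_iff_cobounded]
      simp only [norm_neg, norm_smul, Real.norm_eq_abs]
      exact (tendsto_abs_atTop_atTop.atTop_mul_const (norm_pos_iff.mpr hw))
    have h3 := h1.comp h2
    convert h3 using 2 with lam
    simp only [Function.comp_apply]
    rw [← integral_indicator hS]
    congr 1 with v
    by_cases hv : v ∈ S
    · simp only [Set.indicator_of_mem hv, Real.fourierChar_apply, Circle.smul_def,
        inner_neg_right, inner_smul_right, neg_neg, Circle.coe_exp, mul_one]
      rw [real_inner_comm, smul_eq_mul, mul_one]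
      push_cast
      ring_nf
    · simp [Set.indicator_of_notMem hv]
  have heq : ∀ lam : ℝ, (∫ x in S,
      Complex.exp (2 * Real.pi * Complex.I * lam * ((b + ⟪w₀, x⟫ : ℝ) : ℂ)) ∂volume)
      = Complex.exp (2 * Real.pi * Complex.I * lam * b) *
        ∫ x in S, Complex.exp (2 * Real.pi * Complex.I * lam * ((⟪w₀, x⟫ : ℝ) : ℂ)) ∂volume := by
    intro lam
    rw [← integral_const_mul]
    congr 1 with x
    rw [← Complex.exp_add]
    push_cast
    ring_nf
  rw [tendsto_zero_iff_norm_tendsto_zero]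
  have hnorm : ∀ lam : ℝ, ‖(∫ x in S,
      Complex.exp (2 * Real.pi * Complex.I * lam * ((b + ⟪w₀, x⟫ : ℝ) : ℂ)) ∂volume)‖
      = ‖∫ x in S, Complex.exp (2 * Real.pi * Complex.I * lam * ((⟪w₀, x⟫ : ℝ) : ℂ)) ∂volume‖ := by
    intro lam
    rw [heq, norm_mul]
    have h1 : ‖Complex.exp (2 * Real.pi * Complex.I * lam * b)‖ = 1 := by
      rw [Complex.norm_exp]
      have : (2 * Real.pi * Complex.I * lam * b).re = 0 := by simp
      rw [this, Real.exp_zero]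
    rw [h1, one_mul]
  simp only [hnorm]
  exact (tendsto_zero_iff_norm_tendsto_zero.mp key)

lemma aux_not_span {d : ℕ} (hd : 2 ≤ d) (νk : EuclideanSpace ℝ (Fin d))
    (hdio : ∃ τ : ℝ, 0 < τ ∧ ∃ c₀ : ℝ, 0 < c₀ ∧ ∀ m : Fin d → ℤ, m ≠ 0 →
      c₀ * (∑ i, |(m i : ℝ)|) ^ (-τ) ≤ |∑ i, (m i : ℝ) * νk i|)
    (m : Fin d → ℤ) (hm : m ≠ 0)
    (w : EuclideanSpace ℝ (Fin d)) (hw : ∀ i, w i = (m i : ℝ)) :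
    w ∉ (ℝ ∙ νk : Submodule ℝ (EuclideanSpace ℝ (Fin d))) := by
  intro hmem
  obtain ⟨t, ht⟩ := Submodule.mem_span_singleton.mp hmem
  obtain ⟨τ, hτ, c₀, hc₀, hbound⟩ := hdio
  obtain ⟨i₀, hi₀⟩ : ∃ i, m i ≠ 0 := by
    by_contra h
    push_neg at h
    exact hm (funext fun i => h i)
  have ht0 : t ≠ 0 := by
    rintro rfl
    rw [zero_smul] at ht
    have := hw i₀
    rw [← ht] at this
    simp only [PiLp.zero_apply] at this
    exact hi₀ (by exact_mod_cast this.symm)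
  have hν : ∀ i, νk i = t⁻¹ * (m i : ℝ) := by
    intro i
    have : t * νk i = (m i : ℝ) := by
      have := congrArg (fun v : EuclideanSpace ℝ (Fin d) => v i) ht
      simpa [PiLp.smul_apply, hw i] using this
    field_simp [← this]
    linarith
  have : Nontrivial (Fin d) := ⟨⟨⟨0, by omega⟩, ⟨1, by omega⟩, by simp [Fin.ext_iff]⟩⟩
  obtain ⟨i₁, hi₁⟩ := exists_ne i₀
  set m' : Fin d → ℤ := fun i => if i = i₀ then m i₁ else if i = i₁ then -(m i₀) else 0 with hm'
  have hm'ne : m' ≠ 0 := by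
    intro h
    have h2 : -(m i₀) = 0 := by
      have := congrFun h i₁
      simpa [hm', hi₁] using this
    exact hi₀ (by omega)
  have hsum : ∑ i, (m' i : ℝ) * νk i = 0 := by
    have hterm : ∀ i, (m' i : ℝ) * νk i =
        (if i = i₀ then (m i₁ : ℝ) * νk i else 0) + (if i = i₁ then -((m i₀ : ℝ)) * νk i else 0) := by
      intro i
      by_cases h1 : i = i₀
      · simp [hm', h1, (show i₀ ≠ i₁ from fun hh => hi₁ hh.symm)]
      · by_cases h2 : i = i₁
        · simp [hm', h1, h2, hi₁]
        · simp [hm', h1, h2]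
    rw [Finset.sum_congr rfl (fun i _ => hterm i), Finset.sum_add_distrib,
      Finset.sum_ite_eq' Finset.univ i₀, Finset.sum_ite_eq' Finset.univ i₁]
    simp only [Finset.mem_univ, if_pos]
    rw [hν i₀, hν i₁]
    ring
  have hpos : 0 < c₀ * (∑ i, |(m' i : ℝ)|) ^ (-τ) := by
    apply mul_pos hc₀
    apply Real.rpow_pos_of_pos
    have h1 : 0 < |(m' i₁ : ℝ)| := by
      rw [hm']
      simp only [if_neg hi₁, if_pos rfl]
      simpa using hi₀
    calc 0 < |(m' i₁ : ℝ)| := h1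
      _ ≤ ∑ i, |(m' i : ℝ)| := Finset.single_le_sum (f := fun i => |(m' i : ℝ)|)
          (fun i _ => abs_nonneg _) (Finset.mem_univ i₁)
  have := hbound m' hm'ne
  rw [hsum] at this
  simp only [abs_zero] at this
  linarith

/-- For a bounded convex polygonal domain D whose face normals are Diophantine, and a face Π
with Diophantine normal, the oscillatory integral ∫_Π e^{2πiλ m·y} dσ(y) tends to 0 as
λ → ∞, for every nonzero m ∈ ℤ^d. -/
theorem stmt8 (d N : ℕ) (hd : 2 ≤ d)
    (ν : Fin N → EuclideanSpace ℝ (Fin d)) (c : Fin N → ℝ) (hν : ∀ j, ‖ν j‖ = 1)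
    (hdio : ∀ j, ∃ τ : ℝ, 0 < τ ∧ ∃ c₀ : ℝ, 0 < c₀ ∧ ∀ m : Fin d → ℤ, m ≠ 0 →
      c₀ * (∑ i, |(m i : ℝ)|) ^ (-τ) ≤ |∑ i, (m i : ℝ) * ν j i|)
    (D : Set (EuclideanSpace ℝ (Fin d)))
    (hD : D = ⋂ j, {x | c j < ⟪ν j, x⟫})
    (hDb : IsBounded D) (hDne : D.Nonempty)
    (k₀ : Fin N) (Pi' : Set (EuclideanSpace ℝ (Fin d)))
    (hPi : Pi' = {x | ⟪ν k₀, x⟫ = c k₀} ∩ ⋂ j ∈ {j | j ≠ k₀}, {x | c j < ⟪ν j, x⟫})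
    (m : Fin d → ℤ) (hm : m ≠ 0) :
    Tendsto (fun lam : ℝ =>
        ∫ y in Pi', Complex.exp (2 * Real.pi * Complex.I * lam *
          ((∑ i, (m i : ℝ) * y i : ℝ) : ℂ)) ∂(μH[(d:ℝ) - 1]))
      atTop (nhds 0) := by
  classical
  have hd1 : (1:ℕ) ≤ d := by omega
  set n := d - 1 with hn
  have hreal : (d:ℝ) - 1 = (n:ℝ) := by rw [hn, Nat.cast_sub hd1, Nat.cast_one]
  rw [hreal]
  -- normal vector is nonzero
  have hνk0 : ν k₀ ≠ 0 := by
    intro h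
    have := hν k₀
    rw [h, norm_zero] at this
    norm_num at this
  -- the tangent space of the hyperplane
  set V : Submodule ℝ (EuclideanSpace ℝ (Fin d)) := (ℝ ∙ ν k₀)ᗮ with hV
  have hVrank : finrank ℝ V = n := by
    have h := Submodule.finrank_add_finrank_orthogonal
      (K := (ℝ ∙ ν k₀ : Submodule ℝ (EuclideanSpace ℝ (Fin d))))
    rw [finrank_span_singleton hνk0, ← hV] at h
    have h2 : finrank ℝ (EuclideanSpace ℝ (Fin d)) = d := finrank_euclideanSpace_fin
    omega
  let e : EuclideanSpace ℝ (Fin n) ≃ₗᵢ[ℝ] V :=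
    ((stdOrthonormalBasis ℝ V).repr.trans
      (LinearIsometryEquiv.piLpCongrLeft 2 ℝ ℝ (finCongr hVrank))).symm
  -- base point of the hyperplane
  set p : EuclideanSpace ℝ (Fin d) := (c k₀) • ν k₀ with hpdef
  have hpinner : ⟪ν k₀, p⟫ = c k₀ := by
    rw [hpdef, real_inner_smul_right, real_inner_self_eq_norm_mul_norm, hν k₀]
    ring
  -- the parametrization of the hyperplane
  set ψ : EuclideanSpace ℝ (Fin n) → EuclideanSpace ℝ (Fin d) :=
    fun x => p + ((e x : V) : EuclideanSpace ℝ (Fin d)) with hψ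
  have hiso : Isometry ψ := by
    apply Isometry.of_dist_eq
    intro x y
    rw [dist_eq_norm, dist_eq_norm]
    have h1 : ψ x - ψ y = ((e x - e y : V) : EuclideanSpace ℝ (Fin d)) := by
      simp only [hψ, Submodule.coe_sub]
      abel
    rw [h1, ← Submodule.coe_norm, ← map_sub, e.norm_map]
  have hVmem : ∀ u : V, ⟪ν k₀, (u : EuclideanSpace ℝ (Fin d))⟫ = 0 := fun u =>
    Submodule.mem_orthogonal_singleton_iff_inner_right.mp u.2
  have hrange : Set.range ψ = {x | ⟪ν k₀, x⟫ = c k₀} := by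
    ext x
    constructor
    · rintro ⟨y, rfl⟩
      simp only [hψ, Set.mem_setOf_eq, inner_add_right, hpinner, hVmem (e y), add_zero]
    · intro hx
      have hx' : ⟪ν k₀, x⟫ = c k₀ := hx
      have hxV : x - p ∈ V := by
        rw [hV]
        apply Submodule.mem_orthogonal_singleton_iff_inner_right.mpr
        rw [inner_sub_right, hx', hpinner]
        ring
      exact ⟨e.symm ⟨x - p, hxV⟩, by simp [hψ]⟩
  -- measurability
  have hcont : ∀ j, Continuous fun x : EuclideanSpace ℝ (Fin d) => (⟪ν j, x⟫ : ℝ) :=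
    fun j => continuous_const.inner continuous_id
  have hPimeas : MeasurableSet Pi' := by
    rw [hPi]
    apply MeasurableSet.inter
    · exact (isClosed_eq (hcont k₀) continuous_const).measurableSet
    · exact MeasurableSet.iInter fun j => MeasurableSet.iInter fun _ =>
        (isOpen_lt continuous_const (hcont j)).measurableSet
  set S := ψ ⁻¹' Pi' with hS
  have hSmeas : MeasurableSet S := hPimeas.preimage hiso.continuous.measurable
  have hPiSub : Pi' ⊆ Set.range ψ := by
    rw [hrange, hPi]
    exact Set.inter_subset_left
  have hemb : MeasurableEmbedding ψ := hiso.isClosedEmbedding.measurableEmbedding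
  have hmap : Measure.map ψ (μH[(n:ℝ)]) = (μH[(n:ℝ)]).restrict (Set.range ψ) :=
    hiso.map_hausdorffMeasure (Or.inl (by positivity))
  -- Hausdorff measure is proportional to Lebesgue measure on the parameter space
  obtain ⟨κ, hκ⟩ : ∃ κ : NNReal,
      (μH[(n:ℝ)] : Measure (EuclideanSpace ℝ (Fin n))) = (κ : ENNReal) • volume := by
    have h : ((finrank ℝ (EuclideanSpace ℝ (Fin n)) : ℕ) : ℝ) = (n : ℝ) := by
      rw [finrank_euclideanSpace_fin]
    have inst : (μH[(n:ℝ)] : Measure (EuclideanSpace ℝ (Fin n))).IsAddHaarMeasure :=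
      h ▸ inferInstance
    refine ⟨Measure.addHaarScalarFactor
      (μH[(n:ℝ)] : Measure (EuclideanSpace ℝ (Fin n))) volume, ?_⟩
    rw [← ENNReal.smul_def]
    exact Measure.isAddLeftInvariant_eq_smul
      (μH[(n:ℝ)] : Measure (EuclideanSpace ℝ (Fin n))) volume
  -- the frequency vector
  set w : EuclideanSpace ℝ (Fin d) := WithLp.toLp 2 (fun i => (m i : ℝ)) with hwdef
  have hinner : ∀ v : EuclideanSpace ℝ (Fin d), ⟪w, v⟫ = ∑ i, (m i : ℝ) * v i := by
    intro v
    simp [PiLp.inner_apply, RCLike.inner_apply, conj_trivial, hwdef, mul_comm]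
  have hw_notspan : w ∉ (ℝ ∙ ν k₀ : Submodule ℝ (EuclideanSpace ℝ (Fin d))) :=
    aux_not_span hd (ν k₀) (hdio k₀) m hm w (fun i => rfl)
  set wV := Submodule.orthogonalProjectionOnto V w with hwV
  have hwVne : wV ≠ 0 := by
    rw [hwV, Ne, Submodule.orthogonalProjectionOnto_eq_zero_iff, hV, Submodule.orthogonal_orthogonal]
    exact hw_notspan
  set w₀ := e.symm wV with hw₀def
  have hw₀ : w₀ ≠ 0 := by
    intro h
    exact hwVne (by simpa [hw₀def] using congrArg e h)
  set b : ℝ := ∑ i, (m i : ℝ) * p i with hbdef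
  -- the phase on the hyperplane
  have hkey : ∀ x, ⟪w, ((e x : V) : EuclideanSpace ℝ (Fin d))⟫ = ⟪w₀, x⟫ := by
    intro x
    have h1 : ⟪((e x : V) : EuclideanSpace ℝ (Fin d)), w - (wV : EuclideanSpace ℝ (Fin d))⟫ = 0 :=
      Submodule.inner_right_of_mem_orthogonal (e x).2
        (Submodule.sub_starProjection_mem_orthogonal w)
    have h2 : ⟪w, ((e x : V) : EuclideanSpace ℝ (Fin d))⟫
        = ⟪(wV : EuclideanSpace ℝ (Fin d)), ((e x : V) : EuclideanSpace ℝ (Fin d))⟫ := by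
      rw [inner_sub_right] at h1
      calc ⟪w, ((e x : V) : EuclideanSpace ℝ (Fin d))⟫
          = ⟪((e x : V) : EuclideanSpace ℝ (Fin d)), w⟫ := real_inner_comm _ _
        _ = ⟪((e x : V) : EuclideanSpace ℝ (Fin d)), (wV : EuclideanSpace ℝ (Fin d))⟫ := by
            linarith
        _ = ⟪(wV : EuclideanSpace ℝ (Fin d)), ((e x : V) : EuclideanSpace ℝ (Fin d))⟫ :=
            real_inner_comm _ _
    rw [h2, ← Submodule.coe_inner, ← LinearIsometryEquiv.inner_map_map e.symm wV (e x),
      e.symm_apply_apply]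
  have hphase : ∀ x, (∑ i, (m i : ℝ) * (ψ x) i) = b + ⟪w₀, x⟫ := by
    intro x
    have h1 : ∀ i, (ψ x) i = p i + ((e x : V) : EuclideanSpace ℝ (Fin d)) i := fun i => rfl
    calc ∑ i, (m i : ℝ) * (ψ x) i
        = ∑ i, ((m i : ℝ) * p i + (m i : ℝ) * ((e x : V) : EuclideanSpace ℝ (Fin d)) i) := by
          apply Finset.sum_congr rfl
          intro i _
          rw [h1 i, mul_add]
      _ = b + ∑ i, (m i : ℝ) * ((e x : V) : EuclideanSpace ℝ (Fin d)) i := by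
          rw [Finset.sum_add_distrib, hbdef]
      _ = b + ⟪w₀, x⟫ := by rw [← hinner, hkey]
  -- transfer the integral
  have hfun : ∀ lam : ℝ,
      (∫ y in Pi', Complex.exp (2 * Real.pi * Complex.I * lam *
        ((∑ i, (m i : ℝ) * y i : ℝ) : ℂ)) ∂(μH[(n:ℝ)]))
      = (κ : ENNReal).toReal • ∫ x in S, Complex.exp (2 * Real.pi * Complex.I * lam *
          ((b + ⟪w₀, x⟫ : ℝ) : ℂ)) ∂volume := by
    intro lam
    have hrr : (μH[(n:ℝ)] : Measure (EuclideanSpace ℝ (Fin d))).restrict Pi'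
        = (Measure.map ψ (μH[(n:ℝ)])).restrict Pi' := by
      rw [hmap, Measure.restrict_restrict hPimeas, Set.inter_eq_self_of_subset_left hPiSub]
    rw [hrr, hemb.setIntegral_map, ← hS, hκ, Measure.restrict_smul, integral_smul_measure]
    congr 1
    apply setIntegral_congr_fun hSmeas
    intro x _
    simp only
    rw [hphase x]
  simp only [hfun]
  have := (aux_RL w₀ hw₀ b S hSmeas).const_smul ((κ : ENNReal).toReal)
  simpa using this
end
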